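/- arXiv:1306.4536 — 9 statements merged into one kernel-verified Lean document; each statement's English description precedes it below -/
import Mathlib

section
/- The function H(z) = −z·log z is injective on the slit disk D = { z = r e^{iθ} : 0 < r < e^{-1}, |θ| < π }, where log denotes the principal branch of the logarithm. -/
open Complex

/-- The slit disk `{ z = r e^{iθ} : 0 < r < R, |θ| < α }`. -/
def slitDisk (R α : ℝ) : Set ℂ := {z : ℂ | z ≠ 0 ∧ ‖z‖ < R ∧ |z.arg| < α}

/-- For `u` with `1 ≤ Re u`, the argument lies between `0` and `Im u`. -/
lemma aux_arg_sub_im {u : ℂ} (hre : 1 ≤ u.re) : |u.arg - u.im| ≤ |u.im| := by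
  have hre0 : 0 < u.re := lt_of_lt_of_le one_pos hre
  have hu : u ≠ 0 := by
    intro h; rw [h] at hre0; norm_num at hre0
  have harg2 : |u.arg| < Real.pi / 2 := Complex.abs_arg_lt_pi_div_two_iff.mpr (Or.inl hre0)
  have htan : Real.tan u.arg = u.im / u.re := Complex.tan_arg u
  rcases le_or_gt 0 u.im with him | him
  · have harg0 : 0 ≤ u.arg := Complex.arg_nonneg_iff.mpr him
    have h1 : u.arg ≤ Real.tan u.arg :=
      Real.le_tan harg0 (abs_lt.mp harg2).2
    have h2 : u.im / u.re ≤ u.im := div_le_self him hre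
    have : u.arg ≤ u.im := le_trans h1 (htan ▸ h2)
    rw [_root_.abs_of_nonneg him, _root_.abs_of_nonpos (by linarith)]
    linarith
  · have harg0 : u.arg ≤ 0 := le_of_lt (Complex.arg_neg_iff.mpr him)
    have h1 : -u.arg ≤ Real.tan (-u.arg) :=
      Real.le_tan (by linarith) (by have := (abs_lt.mp harg2).1; linarith)
    rw [Real.tan_neg] at h1
    have h2 : u.im ≤ u.im / u.re := by
      rw [le_div_iff₀ hre0]
      nlinarith
    have : u.im ≤ u.arg := by
      have := htan ▸ h2
      linarith
    rw [_root_.abs_of_neg him, _root_.abs_of_nonneg (by linarith)]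
    linarith

/-- `H(z) = -z log z` is injective on the slit disk of radius `e^{-1}`. -/
theorem stmt2 :
    Set.InjOn (fun z : ℂ => -z * Complex.log z) (slitDisk (Real.exp (-1)) Real.pi) := by
  intro z₁ hz₁ z₂ hz₂ hH
  obtain ⟨hne₁, habs₁, harg₁⟩ := hz₁
  obtain ⟨hne₂, habs₂, harg₂⟩ := hz₂
  set u₁ : ℂ := -Complex.log z₁ with hu₁def
  set u₂ : ℂ := -Complex.log z₂ with hu₂def
  have habspos₁ : 0 < ‖z₁‖ := norm_pos_iff.mpr hne₁
  have habspos₂ : 0 < ‖z₂‖ := norm_pos_iff.mpr hne₂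
  have hre₁ : 1 < u₁.re := by
    have : Real.log ‖z₁‖ < -1 := (Real.log_lt_iff_lt_exp habspos₁).mpr habs₁
    simp only [hu₁def, Complex.neg_re, Complex.log_re]
    linarith
  have hre₂ : 1 < u₂.re := by
    have : Real.log ‖z₂‖ < -1 := (Real.log_lt_iff_lt_exp habspos₂).mpr habs₂
    simp only [hu₂def, Complex.neg_re, Complex.log_re]
    linarith
  have him₁ : |u₁.im| < Real.pi := by
    simp only [hu₁def, Complex.neg_im, abs_neg, Complex.log_im]
    exact harg₁
  have him₂ : |u₂.im| < Real.pi := by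
    simp only [hu₂def, Complex.neg_im, abs_neg, Complex.log_im]
    exact harg₂
  have hz₁exp : z₁ = Complex.exp (-u₁) := by
    rw [hu₁def, neg_neg, Complex.exp_log hne₁]
  have hz₂exp : z₂ = Complex.exp (-u₂) := by
    rw [hu₂def, neg_neg, Complex.exp_log hne₂]
  have hune₁ : u₁ ≠ 0 := by
    intro h; rw [h] at hre₁; norm_num at hre₁
  have hune₂ : u₂ ≠ 0 := by
    intro h; rw [h] at hre₂; norm_num at hre₂
  -- rewrite hypothesis as u₁ e^{-u₁} = u₂ e^{-u₂}
  have key : u₁ * Complex.exp (-u₁) = u₂ * Complex.exp (-u₂) := by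
    have h1 : Complex.log z₁ = -u₁ := by rw [hu₁def, neg_neg]
    have h2 : Complex.log z₂ = -u₂ := by rw [hu₂def, neg_neg]
    have := hH
    simp only [h1, h2] at this
    rw [hz₁exp, hz₂exp] at this
    ring_nf at this ⊢
    linear_combination this
  -- take logs
  have hexp : Complex.exp (Complex.log u₁ - u₁) = Complex.exp (Complex.log u₂ - u₂) := by
    rw [sub_eq_add_neg, sub_eq_add_neg, Complex.exp_add, Complex.exp_add,
      Complex.exp_log hune₁, Complex.exp_log hune₂]
    exact key
  obtain ⟨n, hn⟩ := Complex.exp_eq_exp_iff_exists_int.mp hexp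
  -- imaginary parts
  have hnim : u₁.arg - u₁.im = u₂.arg - u₂.im + n * (2 * Real.pi) := by
    have := congrArg Complex.im hn
    simpa [Complex.log_im, Complex.sub_im, Complex.add_im, Complex.mul_im,
      Complex.intCast_re, Complex.intCast_im] using this
  have ha₁ := aux_arg_sub_im (le_of_lt hre₁)
  have ha₂ := aux_arg_sub_im (le_of_lt hre₂)
  have hn0 : n = 0 := by
    have hpi : 0 < Real.pi := Real.pi_pos
    have h1 : |u₁.arg - u₁.im| < Real.pi := lt_of_le_of_lt ha₁ him₁
    have h2 : |u₂.arg - u₂.im| < Real.pi := lt_of_le_of_lt ha₂ him₂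
    have h3 : |(n : ℝ) * (2 * Real.pi)| < 2 * Real.pi := by
      have heq : (n : ℝ) * (2 * Real.pi) = (u₁.arg - u₁.im) - (u₂.arg - u₂.im) := by linarith
      rw [heq]
      calc |(u₁.arg - u₁.im) - (u₂.arg - u₂.im)|
          ≤ |u₁.arg - u₁.im| + |u₂.arg - u₂.im| := abs_sub _ _
        _ < 2 * Real.pi := by linarith
    rw [abs_mul, _root_.abs_of_pos (by linarith : (0:ℝ) < 2 * Real.pi)] at h3
    have h4 : |(n : ℝ)| < 1 := by nlinarith [abs_nonneg ((n : ℝ))]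
    have h5 : |n| < 1 := by
      have : ((|n| : ℤ) : ℝ) < 1 := by rw [Int.cast_abs]; exact h4
      exact_mod_cast this
    exact Int.abs_lt_one_iff.mp h5
  rw [hn0] at hn
  simp only [Int.cast_zero, zero_mul, add_zero] at hn
  -- now log u₁ - log u₂ = u₁ - u₂
  have hlog : Complex.log u₁ - Complex.log u₂ = u₁ - u₂ := by
    linear_combination hn
  -- mean value estimate on the half plane Re ≥ m
  set m : ℝ := min u₁.re u₂.re with hm
  have hm1 : 1 < m := lt_min hre₁ hre₂
  set s : Set ℂ := {c : ℂ | m ≤ c.re} with hs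
  have hconv : Convex ℝ s := convex_halfSpace_re_ge m
  have hderiv : ∀ x ∈ s, HasDerivWithinAt Complex.log x⁻¹ s x := by
    intro x hx
    have hxre : 0 < x.re := lt_of_lt_of_le (by linarith) hx
    exact (Complex.hasDerivAt_log (Or.inl hxre)).hasDerivWithinAt
  have hbound : ∀ x ∈ s, ‖x⁻¹‖ ≤ 1 / m := by
    intro x hx
    have hxre : m ≤ x.re := hx
    have hxabs : m ≤ ‖x‖ := le_trans hxre (Complex.re_le_norm x)
    rw [norm_inv]
    rw [div_eq_mul_inv, one_mul]
    exact inv_anti₀ (by linarith) hxabs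
  have hmem₁ : u₁ ∈ s := show m ≤ u₁.re from min_le_left _ _
  have hmem₂ : u₂ ∈ s := show m ≤ u₂.re from min_le_right _ _
  have hmv : ‖Complex.log u₁ - Complex.log u₂‖ ≤ (1 / m) * ‖u₁ - u₂‖ :=
    hconv.norm_image_sub_le_of_norm_hasDerivWithin_le hderiv hbound hmem₂ hmem₁
  rw [hlog] at hmv
  have hzero : u₁ - u₂ = 0 := by
    by_contra h
    have hpos : 0 < ‖u₁ - u₂‖ := norm_pos_iff.mpr h
    have : 1 / m < 1 := by
      rw [div_lt_one (by linarith)]; exact hm1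
    nlinarith
  have : u₁ = u₂ := sub_eq_zero.mp hzero
  rw [hz₁exp, hz₂exp, this]
end

section
/- For z = r e^{iθ} with 0 < r ≤ e^{-1/2} and θ ∈ (−π,π), the argument of H(z) = −z log z satisfies |Arg H(z)| ≤ |θ|; in particular H(z) is not a negative real number. -/
lemma arctan_nonneg' {x : ℝ} (hx : 0 ≤ x) : 0 ≤ Real.arctan x := by
  rw [← Real.arctan_zero]
  exact Real.arctan_strictMono.monotone hx

lemma arctan_nonpos' {x : ℝ} (hx : x ≤ 0) : Real.arctan x ≤ 0 := by
  rw [← Real.arctan_zero]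
  exact Real.arctan_strictMono.monotone hx

lemma arctan_le_self' {x : ℝ} (hx : 0 ≤ x) : Real.arctan x ≤ x := by
  have h := Real.le_tan (arctan_nonneg' hx) (Real.arctan_lt_pi_div_two x)
  rwa [Real.tan_arctan] at h

lemma self_le_arctan' {x : ℝ} (hx : x ≤ 0) : x ≤ Real.arctan x := by
  have h := arctan_le_self' (neg_nonneg.mpr hx)
  rw [Real.arctan_neg] at h
  linarith

/-- For `z = r e^{iθ}` with `0 < r ≤ e^{-1/2}` and `θ ∈ (-π,π)`, one has
`|Arg(-z log z)| ≤ |θ|`; in particular `-z log z` is not a negative real number. -/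
theorem stmt3 (z : ℂ) (hz : z ≠ 0) (hr : ‖z‖ ≤ Real.exp (-(1/2)))
    (hθ : |z.arg| < Real.pi) :
    |(-z * Complex.log z).arg| ≤ |z.arg| ∧
      ∀ x : ℝ, x < 0 → -z * Complex.log z ≠ (x : ℂ) := by
  set θ := z.arg with hθdef
  have hr0 : 0 < ‖z‖ := norm_pos_iff.mpr hz
  have hlog : Real.log (‖z‖) ≤ -(1/2) := by
    have := Real.log_le_log hr0 hr
    rwa [Real.log_exp] at this
  set L : ℝ := -Real.log (‖z‖) with hL
  have hL2 : (1:ℝ)/2 ≤ L := by rw [hL]; linarith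
  have hLpos : 0 < L := by linarith
  set w : ℂ := -Complex.log z with hw
  have hwre : w.re = L := by
    simp [hw, Complex.log_re, hL]
  have hwim : w.im = -θ := by
    simp [hw, Complex.log_im, hθdef]
  have hw0 : w ≠ 0 := by
    intro h
    rw [h] at hwre
    simp at hwre
    linarith [hwre, hLpos]
  set t : ℝ := Real.arctan (θ / L) with ht
  have hargw : w.arg = -t := by
    have hre : 0 < w.re := by rw [hwre]; exact hLpos
    have habs : |w.arg| < Real.pi / 2 :=
      Complex.abs_arg_lt_pi_div_two_iff.mpr (Or.inl hre)
    have h1 : Real.arctan (Real.tan w.arg) = w.arg :=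
      Real.arctan_tan (by linarith [abs_lt.mp habs]) (by linarith [abs_lt.mp habs])
    rw [Complex.tan_arg, hwre, hwim] at h1
    rw [← h1, ht, neg_div, Real.arctan_neg]
  -- key bound
  have hkey : |θ - t| ≤ |θ| := by
    rcases le_or_gt 0 θ with h0 | h0
    · have ht0 : 0 ≤ t := arctan_nonneg' (div_nonneg h0 hLpos.le)
      have ht1 : t ≤ 2 * θ := by
        have h1 : t ≤ θ / L := arctan_le_self' (div_nonneg h0 hLpos.le)
        have h2 : θ / L ≤ 2 * θ := by
          rw [div_le_iff₀ hLpos]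
          nlinarith
        linarith
      rw [abs_of_nonneg h0, abs_le]
      constructor <;> linarith
    · have ht0 : t ≤ 0 := arctan_nonpos' (div_nonpos_of_nonpos_of_nonneg h0.le hLpos.le)
      have ht1 : 2 * θ ≤ t := by
        have h1 : θ / L ≤ t := self_le_arctan' (div_nonpos_of_nonpos_of_nonneg h0.le hLpos.le)
        have h2 : 2 * θ ≤ θ / L := by
          rw [le_div_iff₀ hLpos]
          nlinarith
        linarith
      rw [abs_of_neg h0, abs_le]
      constructor <;> linarith
  have hmul : (-z * Complex.log z).arg = θ - t := by
    have hzw : -z * Complex.log z = z * w := by rw [hw]; ring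
    rw [hzw, Complex.arg_mul hz hw0, hargw, ← hθdef]
    · ring
    · rw [hargw, ← hθdef]
      constructor
      · have := abs_le.mp hkey
        have := abs_lt.mp hθ
        simp only [← sub_eq_add_neg]
        linarith [(abs_le.mp hkey).1, (abs_lt.mp hθ).1]
      · have : θ - t ≤ |θ| := le_trans (le_abs_self _) hkey
        simp only [← sub_eq_add_neg]
        linarith [hθ.le]
  have hmain : |(-z * Complex.log z).arg| ≤ |θ| := by rw [hmul]; exact hkey
  refine ⟨hmain, fun x hx hEq => ?_⟩
  have : (-z * Complex.log z).arg = Real.pi := by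
    rw [hEq]; exact Complex.arg_ofReal_of_neg hx
  rw [this] at hmain
  have := lt_of_le_of_lt hmain hθ
  rw [abs_of_pos Real.pi_pos] at this
  exact lt_irrefl _ this
end

section
/- Let ρ > 0 and z, z' be complex numbers not on the nonpositive real axis with ρ ≥ |z| ≥ 8|z'|, where ρ is small enough that |w log w| ≤ −2|w| ln|w| and −ln(|w|/8) ≤ −2 ln|w| hold for all w in the punctured slit disk of radius ρ. Then |z log z − z' log z'| ≥ −(1/2)|z| ln|z|. -/
open Real

lemma mul_log_anti {b c : ℝ} (hb : 0 < b) (hbc : b ≤ c) (hc : c ≤ Real.exp (-1)) :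
    c * Real.log c ≤ b * Real.log b := by
  have hanti : StrictAntiOn (fun x : ℝ ↦ x * Real.log x) (Set.Icc 0 (Real.exp (-1))) := by
    apply strictAntiOn_of_deriv_neg (convex_Icc _ _)
      (Real.continuous_mul_log.continuousOn)
    intro x hx
    rw [interior_Icc] at hx
    rw [Real.deriv_mul_log (ne_of_gt hx.1)]
    have : Real.log x < -1 := by
      have := Real.log_lt_log hx.1 hx.2
      rwa [Real.log_exp] at this
    linarith
  rcases eq_or_lt_of_le hbc with rfl | hlt
  · exact le_refl _
  · exact le_of_lt (hanti ⟨le_of_lt hb, le_trans hbc hc⟩ ⟨le_trans (le_of_lt hb) hbc, hc⟩ hlt)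

/-- If `ρ ≥ |z| ≥ 8|z'|` with `z, z'` off the nonpositive real axis, and `ρ` is small
enough that `|w log w| ≤ -2|w| ln|w|` and `-ln(|w|/8) ≤ -2 ln|w|` hold on the punctured
slit disk of radius `ρ`, then `|z log z - z' log z'| ≥ -(1/2)|z| ln|z|`. -/
theorem stmt6 (ρ : ℝ) (hρ : 0 < ρ) (z z' : ℂ)
    (hz0 : z ≠ 0) (hzarg : |z.arg| < Real.pi)
    (hz'0 : z' ≠ 0) (hz'arg : |z'.arg| < Real.pi)
    (hzρ : ‖z‖ ≤ ρ)
    (h8 : 8 * ‖z'‖ ≤ ‖z‖)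
    (hsmall1 : ∀ w : ℂ, w ≠ 0 → |w.arg| < Real.pi → ‖w‖ ≤ ρ →
      ‖w * Complex.log w‖ ≤ -2 * (‖w‖ * Real.log (‖w‖)))
    (hsmall2 : ∀ w : ℂ, w ≠ 0 → |w.arg| < Real.pi → ‖w‖ ≤ ρ →
      -Real.log (‖w‖ / 8) ≤ -2 * Real.log (‖w‖)) :
    -(1/2) * (‖z‖ * Real.log (‖z‖))
      ≤ ‖z * Complex.log z - z' * Complex.log z'‖ := by
  set a := ‖z‖ with ha
  set b := ‖z'‖ with hb
  have ha0 : 0 < a := norm_pos_iff.mpr hz0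
  have hb0 : 0 < b := norm_pos_iff.mpr hz'0
  -- from hsmall2 at z : a ≤ 1/8
  have hloga : Real.log a ≤ -Real.log 8 := by
    have := hsmall2 z hz0 hzarg hzρ
    rw [Real.log_div (ne_of_gt ha0) (by norm_num)] at this
    linarith
  have ha8 : a / 8 ≤ Real.exp (-1) := by
    have h8pos : (0:ℝ) < Real.log 8 := Real.log_pos (by norm_num)
    have : a ≤ 1/8 := by
      have := Real.log_le_log_iff ha0 (by norm_num : (0:ℝ) < 1/8)
      rw [← this]
      rw [show (1/8 : ℝ) = 8⁻¹ by norm_num, Real.log_inv]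
      linarith
    have he : (1/64 : ℝ) ≤ Real.exp (-1) := by
      rw [Real.exp_neg]
      rw [div_le_iff₀ (by norm_num : (0:ℝ) < 64)] at *
      nlinarith [Real.exp_one_lt_d9, Real.exp_pos (1:ℝ),
        inv_mul_cancel₀ (ne_of_gt (Real.exp_pos (1:ℝ)))]
    linarith
  have hba : b ≤ a / 8 := by linarith
  -- lower bound : |z log z| ≥ -a log a
  have hlow : -(a * Real.log a) ≤ ‖z * Complex.log z‖ := by
    rw [norm_mul]
    have h1 : |Real.log a| ≤ ‖Complex.log z‖ := by
      have := Complex.abs_re_le_norm (Complex.log z)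
      rwa [Complex.log_re] at this
    have h2 : -Real.log a ≤ |Real.log a| := neg_le_abs _
    calc -(a * Real.log a) = a * (-Real.log a) := by ring
      _ ≤ a * |Real.log a| := by
          exact mul_le_mul_of_nonneg_left h2 (le_of_lt ha0)
      _ ≤ a * ‖Complex.log z‖ := by
          exact mul_le_mul_of_nonneg_left h1 (le_of_lt ha0)
  -- upper bound on |z' log z'|
  have hbρ : b ≤ ρ := le_trans hba (by linarith)
  have hup1 : ‖z' * Complex.log z'‖ ≤ -2 * (b * Real.log b) :=
    hsmall1 z' hz'0 hz'arg hbρ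
  have hmono : b * Real.log b ≥ (a/8) * Real.log (a/8) :=
    mul_log_anti hb0 hba ha8
  have hs2 : -Real.log (a / 8) ≤ -2 * Real.log a := hsmall2 z hz0 hzarg hzρ
  have hup : ‖z' * Complex.log z'‖ ≤ -(1/2) * (a * Real.log a) := by
    have h3 : -2 * (b * Real.log b) ≤ -2 * ((a/8) * Real.log (a/8)) := by linarith
    have h4 : -2 * ((a/8) * Real.log (a/8)) = (a/4) * (-Real.log (a/8)) := by ring
    have h5 : (a/4) * (-Real.log (a/8)) ≤ (a/4) * (-2 * Real.log a) :=
      mul_le_mul_of_nonneg_left hs2 (by linarith)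
    calc ‖z' * Complex.log z'‖ ≤ -2 * (b * Real.log b) := hup1
      _ ≤ (a/4) * (-Real.log (a/8)) := by linarith
      _ ≤ (a/4) * (-2 * Real.log a) := h5
      _ = -(1/2) * (a * Real.log a) := by ring
  have htri : ‖z * Complex.log z‖ - ‖z' * Complex.log z'‖
      ≤ ‖z * Complex.log z - z' * Complex.log z'‖ := by
    simpa using
      norm_sub_norm_le (z * Complex.log z) (z' * Complex.log z')
  linarith
end

section
/- Let Ω(y) be a real power series with Ω(0) = 0 and Ω'(0) > 0, analytic on [0,ω) where ω ∈ (0,∞] is its first singularity on the positive real axis. Let Y be the unique power series with Y(0)=0 and Ω(Y(z)) = z. Define τ as the smallest y in [0,ω) with Ω'(y) = 0 if such exists, and τ = ω otherwise. Then there exists ρ ∈ (0,∞] such that Y extends analytically to a neighbourhood of [0,ρ), is real-valued and strictly increasing there, satisfies Ω(Y(z)) = z and Y(z) ∈ [0,ω) for z ∈ [0,ρ), and Y(z) → τ as z → ρ⁻ while Ω(y) → ρ as y → τ⁻. -/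
open Filter Set

/-- The derivative of a function analytic at a point is analytic at that point. -/
lemma stmt9_analyticAt_deriv {f : ℝ → ℝ} {x : ℝ} (h : AnalyticAt ℝ f x) :
    AnalyticAt ℝ (deriv f) x := by
  obtain ⟨u, hu, huo, hxu⟩ := eventually_nhds_iff.mp h.eventually_analyticAt
  exact (AnalyticOnNhd.deriv (fun y hy => hu y hy)) x hxu

/-- An analytic real function with nonvanishing derivative has a local analytic inverse. -/
lemma stmt9_exists_analytic_inverse (f : ℝ → ℝ) (a : ℝ) (hf : AnalyticAt ℝ f a)
    (hd : deriv f a ≠ 0) :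
    ∃ g : ℝ → ℝ, AnalyticAt ℝ g (f a) ∧ g (f a) = a ∧ ∀ᶠ z in nhds (f a), f (g z) = z := by
  obtain ⟨p, hp⟩ := hf
  have hds : HasStrictDerivAt f (deriv f a) a := hp.deriv ▸ hp.hasStrictDerivAt
  set i : ℝ ≃L[ℝ] ℝ := ContinuousLinearEquiv.unitsEquivAut ℝ (Units.mk0 _ hd) with hi
  have hF : HasStrictFDerivAt f (i : ℝ →L[ℝ] ℝ) a := hds.hasStrictFDerivAt_equiv hd
  set φ := hF.toOpenPartialHomeomorph f with hφ
  have hcoe : (φ : ℝ → ℝ) = f := hF.toOpenPartialHomeomorph_coe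
  have hsrc : a ∈ φ.source := hF.mem_toOpenPartialHomeomorph_source
  have hφa : AnalyticAt ℝ φ a := by rw [hcoe]; exact ⟨p, hp⟩
  have hfd : fderiv ℝ (φ : ℝ → ℝ) a = (i : ℝ →L[ℝ] ℝ) := by
    rw [hcoe]; exact hF.hasFDerivAt.fderiv
  have hsymm := φ.analyticAt_symm' hsrc hφa hfd
  have hφaeq : φ a = f a := congrFun hcoe a
  refine ⟨φ.symm, by rwa [hφaeq] at hsymm, by rw [← hφaeq]; exact φ.left_inv hsrc, ?_⟩
  have := φ.eventually_right_inverse' hsrc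
  rw [hφaeq] at this
  filter_upwards [this] with z hz
  rw [← hcoe]; exact hz

lemma stmt9_mem_comap {τ c : EReal} (hc : c < τ) :
    {y : ℝ | c < (y : EReal) ∧ (y : EReal) < τ} ∈
      Filter.comap (fun y : ℝ => (y : EReal)) (nhdsWithin τ (Iio τ)) := by
  have h1 : Ioi c ∩ Iio τ ∈ nhdsWithin τ (Iio τ) :=
    inter_mem (nhdsWithin_le_nhds (isOpen_Ioi.mem_nhds hc)) self_mem_nhdsWithin
  exact preimage_mem_comap h1
/-- Inversion of a real power series along the positive axis. Let `Ω` be real-analytic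
on a neighbourhood of `[0,ω)` (with `ω ∈ (0,∞]`, thought of as its first positive
singularity), `Ω(0) = 0`, `Ω'(0) > 0`. Let `τ` be the smallest zero of `Ω'` in `[0,ω)`
if one exists, and `τ = ω` otherwise. Then there is `ρ ∈ (0,∞]` and an analytic
continuation `Y` of the compositional inverse of `Ω` on a neighbourhood of `[0,ρ)`,
real-valued and increasing there, with `Ω(Y(z)) = z` and `Y(z) ∈ [0,ω)` on `[0,ρ)`,
`Y(z) → τ` as `z → ρ⁻` and `Ω(y) → ρ` as `y → τ⁻`. -/
theorem stmt9 (Ω : ℝ → ℝ) (ω : EReal) (hω : 0 < ω)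
    (hΩan : AnalyticOnNhd ℝ Ω {y : ℝ | 0 ≤ y ∧ (y : EReal) < ω})
    (hΩ0 : Ω 0 = 0) (hΩ'0 : 0 < deriv Ω 0)
    (τ : EReal) (hτω : τ ≤ ω)
    (hτ1 : ∀ y : ℝ, 0 ≤ y → (y : EReal) < τ → deriv Ω y ≠ 0)
    (hτ2 : τ = ω ∨ ∃ y : ℝ, 0 ≤ y ∧ (y : EReal) = τ ∧ deriv Ω y = 0) :
    ∃ ρ : EReal, 0 < ρ ∧ ∃ Y : ℝ → ℝ,
      AnalyticOnNhd ℝ Y {z : ℝ | 0 ≤ z ∧ (z : EReal) < ρ} ∧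
      Y 0 = 0 ∧
      StrictMonoOn Y {z : ℝ | 0 ≤ z ∧ (z : EReal) < ρ} ∧
      (∀ z : ℝ, 0 ≤ z → (z : EReal) < ρ →
        0 ≤ Y z ∧ ((Y z : EReal) < ω ∧ Ω (Y z) = z)) ∧
      Tendsto (fun z : ℝ => (Y z : EReal))
        (Filter.comap (fun z : ℝ => (z : EReal)) (nhdsWithin ρ (Iio ρ))) (nhds τ) ∧
      Tendsto (fun y : ℝ => (Ω y : EReal))
        (Filter.comap (fun y : ℝ => (y : EReal)) (nhdsWithin τ (Iio τ))) (nhds ρ) := by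
  classical
  -- τ is positive
  have hτpos : (0 : EReal) < τ := by
    rcases hτ2 with h | ⟨y, hy0, hyτ, hdy⟩
    · rwa [h]
    · rcases lt_or_eq_of_le hy0 with h' | h'
      · rw [← hyτ]; exact EReal.coe_pos.mpr h'
      · exact absurd hdy.symm (by rw [← h']; exact hΩ'0.ne)
  -- a small ball around 0 on which Ω is analytic with positive derivative
  have hA0 : AnalyticAt ℝ Ω 0 := hΩan 0 ⟨le_rfl, hω⟩
  have h1 : ∀ᶠ y in nhds 0, AnalyticAt ℝ Ω y := hA0.eventually_analyticAt
  have h2 : ∀ᶠ y in nhds 0, 0 < deriv Ω y :=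
    (stmt9_analyticAt_deriv hA0).continuousAt.eventually (eventually_gt_nhds hΩ'0)
  obtain ⟨ε, hε, hball⟩ := Metric.eventually_nhds_iff_ball.mp (h1.and h2)
  set J : Set ℝ := {y : ℝ | -ε < y ∧ (y : EReal) < τ} with hJdef
  have hJopen : IsOpen J := by
    have : J = Ioi (-ε) ∩ ((fun y : ℝ => (y : EReal)) ⁻¹' Iio τ) := rfl
    rw [this]
    exact isOpen_Ioi.inter (isOpen_Iio.preimage continuous_coe_real_ereal)
  have hSJ : ∀ y : ℝ, 0 ≤ y → (y : EReal) < τ → y ∈ J := fun y hy0 hyτ =>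
    ⟨lt_of_lt_of_le (neg_lt_zero.mpr hε) hy0, hyτ⟩
  have hJan : ∀ y ∈ J, AnalyticAt ℝ Ω y := by
    intro y hy
    rcases le_or_gt 0 y with h | h
    · exact hΩan y ⟨h, lt_of_lt_of_le hy.2 hτω⟩
    · exact (hball y (Metric.mem_ball.mpr (by
        rw [Real.dist_eq, sub_zero]; exact abs_lt.mpr ⟨hy.1, h.trans hε⟩))).1
  have hJd : ∀ y ∈ J, 0 < deriv Ω y := by
    intro y hy
    rcases lt_or_ge y 0 with h | h
    · exact (hball y (Metric.mem_ball.mpr (by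
        rw [Real.dist_eq, sub_zero]; exact abs_lt.mpr ⟨hy.1, h.trans hε⟩))).2
    · by_contra hle
      push_neg at hle
      have hcont : ContinuousOn (deriv Ω) (Icc 0 y) := by
        intro c hc
        have hcω : (c : EReal) < ω :=
          lt_of_le_of_lt (EReal.coe_le_coe_iff.mpr hc.2) (lt_of_lt_of_le hy.2 hτω)
        exact (stmt9_analyticAt_deriv (hΩan c ⟨hc.1, hcω⟩)).continuousAt.continuousWithinAt
      have hmem : (0 : ℝ) ∈ Icc (deriv Ω y) (deriv Ω 0) := ⟨hle, hΩ'0.le⟩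
      obtain ⟨c, hc, hc0⟩ := intermediate_value_Icc' h hcont hmem
      exact hτ1 c hc.1 (lt_of_le_of_lt (EReal.coe_le_coe_iff.mpr hc.2) hy.2) hc0
  have hJconv : Convex ℝ J := by
    rw [convex_iff_ordConnected]
    exact ⟨fun x hx y hy z hz =>
      ⟨lt_of_lt_of_le hx.1 hz.1, lt_of_le_of_lt (EReal.coe_le_coe_iff.mpr hz.2) hy.2⟩⟩
  have hcontJ : ContinuousOn Ω J := fun y hy => (hJan y hy).continuousAt.continuousWithinAt
  have hmono : StrictMonoOn Ω J :=
    strictMonoOn_of_deriv_pos hJconv hcontJ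
      (fun x hx => hJd x (by rwa [hJopen.interior_eq] at hx))
  have hinj : InjOn Ω J := hmono.injOn
  have hΩmono : MonotoneOn Ω J := hmono.monotoneOn
  set S : Set ℝ := {y : ℝ | 0 ≤ y ∧ (y : EReal) < τ} with hSdef
  have hSsubJ : S ⊆ J := fun y hy => hSJ y hy.1 hy.2
  set ρ : EReal := sSup ((fun y => (Ω y : EReal)) '' S) with hρdef
  have h0J : (0 : ℝ) ∈ J := hSJ 0 le_rfl hτpos
  obtain ⟨y₀, hy₀0, hy₀τ⟩ := EReal.exists_between_coe_real hτpos
  have hy₀pos : 0 < y₀ := EReal.coe_pos.mp hy₀0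
  have hy₀S : y₀ ∈ S := ⟨hy₀pos.le, hy₀τ⟩
  have hΩy₀pos : 0 < Ω y₀ := by
    have := hmono h0J (hSsubJ hy₀S) hy₀pos
    rwa [hΩ0] at this
  have hle_ρ : ∀ y ∈ S, ((Ω y : EReal)) ≤ ρ := fun y hy => le_sSup (mem_image_of_mem _ hy)
  have hρpos : (0 : EReal) < ρ :=
    lt_of_lt_of_le (EReal.coe_pos.mpr hΩy₀pos) (hle_ρ y₀ hy₀S)
  have hsurj : ∀ z : ℝ, 0 ≤ z → (z : EReal) < ρ → ∃ y ∈ S, Ω y = z := by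
    intro z hz0 hzρ
    obtain ⟨b, hb, hzb⟩ := lt_sSup_iff.mp hzρ
    obtain ⟨y₁, hy₁S, rfl⟩ := hb
    have hzy₁ : z < Ω y₁ := EReal.coe_lt_coe_iff.mp hzb
    have hcont1 : ContinuousOn Ω (Icc 0 y₁) := fun c hc =>
      (hJan c (hSJ c hc.1
        (lt_of_le_of_lt (EReal.coe_le_coe_iff.mpr hc.2) hy₁S.2))).continuousAt.continuousWithinAt
    have hmem : z ∈ Icc (Ω 0) (Ω y₁) := by rw [hΩ0]; exact ⟨hz0, hzy₁.le⟩
    obtain ⟨y, hy, hyz⟩ := intermediate_value_Icc hy₁S.1 hcont1 hmem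
    exact ⟨y, ⟨hy.1, lt_of_le_of_lt (EReal.coe_le_coe_iff.mpr hy.2) hy₁S.2⟩, hyz⟩
  set Y : ℝ → ℝ := Function.invFunOn Ω J with hYdef
  have hYspec : ∀ z : ℝ, 0 ≤ z → (z : EReal) < ρ → Y z ∈ S ∧ Ω (Y z) = z := by
    intro z hz0 hzρ
    obtain ⟨y, hyS, hyz⟩ := hsurj z hz0 hzρ
    have hex : ∃ x ∈ J, Ω x = z := ⟨y, hSsubJ hyS, hyz⟩
    have hm := Function.invFunOn_mem hex
    have he := Function.invFunOn_eq hex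
    have : Y z = y := hinj hm (hSsubJ hyS) (by rw [he, hyz])
    exact ⟨this ▸ hyS, he⟩
  have hY0 : Y 0 = 0 := by
    have h := hYspec 0 le_rfl hρpos
    exact hinj (hSsubJ h.1) h0J (by rw [h.2, hΩ0])
  have hYmono : StrictMonoOn Y {z : ℝ | 0 ≤ z ∧ (z : EReal) < ρ} := by
    intro z₁ hz₁ z₂ hz₂ h12
    by_contra hle
    push_neg at hle
    have e₁ := hYspec z₁ hz₁.1 hz₁.2
    have e₂ := hYspec z₂ hz₂.1 hz₂.2
    have := hΩmono (hSsubJ e₂.1) (hSsubJ e₁.1) hle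
    rw [e₁.2, e₂.2] at this
    exact absurd h12 (not_lt.mpr this)
  have hYan : AnalyticOnNhd ℝ Y {z : ℝ | 0 ≤ z ∧ (z : EReal) < ρ} := by
    intro z₀ hz₀
    obtain ⟨hz₀S, hz₀eq⟩ := hYspec z₀ hz₀.1 hz₀.2
    obtain ⟨g, hgan, hg0, hgev⟩ := stmt9_exists_analytic_inverse Ω (Y z₀)
      (hJan _ (hSsubJ hz₀S)) (ne_of_gt (hJd _ (hSsubJ hz₀S)))
    rw [hz₀eq] at hgan hg0 hgev
    have hgJ : ∀ᶠ z in nhds z₀, g z ∈ J :=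
      hgan.continuousAt (hJopen.mem_nhds (by rw [hg0]; exact hSsubJ hz₀S))
    have heq : ∀ᶠ z in nhds z₀, g z = Y z := by
      filter_upwards [hgJ, hgev] with z hzJ hzr
      have hex : ∃ x ∈ J, Ω x = z := ⟨g z, hzJ, hzr⟩
      exact hinj hzJ (Function.invFunOn_mem hex) (by rw [hzr, Function.invFunOn_eq hex])
    exact hgan.congr heq
  have hprop : ∀ z : ℝ, 0 ≤ z → (z : EReal) < ρ →
      0 ≤ Y z ∧ ((Y z : EReal) < ω ∧ Ω (Y z) = z) := by
    intro z h0 hρz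
    obtain ⟨hS', heq⟩ := hYspec z h0 hρz
    exact ⟨hS'.1, lt_of_lt_of_le hS'.2 hτω, heq⟩
  have hTY : Tendsto (fun z : ℝ => (Y z : EReal))
      (Filter.comap (fun z : ℝ => (z : EReal)) (nhdsWithin ρ (Iio ρ))) (nhds τ) := by
    rw [tendsto_order]
    constructor
    · intro c hc
      rcases lt_or_ge c 0 with hc0 | hc0
      · filter_upwards [stmt9_mem_comap hρpos] with z hz
        have h := hYspec z (EReal.coe_pos.mp hz.1).le hz.2
        exact lt_of_lt_of_le hc0 (EReal.coe_nonneg.mpr h.1.1)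
      · have hcne_top : c ≠ ⊤ := ne_top_of_lt hc
        have hcne_bot : c ≠ ⊥ := fun h => by simp [h] at hc0
        set c' := c.toReal with hc'def
        have hc'coe : (c' : EReal) = c := EReal.coe_toReal hcne_top hcne_bot
        have hc'0 : 0 ≤ c' := by rw [← EReal.coe_nonneg, hc'coe]; exact hc0
        have hc'S : c' ∈ S := ⟨hc'0, by rw [hc'coe]; exact hc⟩
        obtain ⟨y₁, hcy₁, hy₁τ⟩ := EReal.exists_between_coe_real hc
        have hc'y₁ : c' < y₁ := by rw [← EReal.coe_lt_coe_iff, hc'coe]; exact hcy₁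
        have hy₁S : y₁ ∈ S := ⟨hc'0.trans hc'y₁.le, hy₁τ⟩
        have hΩlt : (Ω c' : EReal) < ρ :=
          lt_of_lt_of_le
            (EReal.coe_lt_coe_iff.mpr (hmono (hSsubJ hc'S) (hSsubJ hy₁S) hc'y₁))
            (hle_ρ y₁ hy₁S)
        have hΩc'0 : 0 ≤ Ω c' := by
          have := hΩmono h0J (hSsubJ hc'S) hc'0
          rwa [hΩ0] at this
        filter_upwards [stmt9_mem_comap hΩlt] with z hz
        have hz0 : 0 ≤ z := by
          have h0z : (0 : EReal) ≤ (z : EReal) :=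
            le_of_lt (lt_of_le_of_lt (EReal.coe_nonneg.mpr hΩc'0) hz.1)
          exact EReal.coe_nonneg.mp h0z
        have hspec := hYspec z hz0 hz.2
        have hlt : c' < Y z := by
          by_contra hle
          push_neg at hle
          have := hΩmono (hSsubJ hspec.1) (hSsubJ hc'S) hle
          rw [hspec.2] at this
          exact absurd (EReal.coe_lt_coe_iff.mp hz.1) (not_lt.mpr this)
        calc c = (c' : EReal) := hc'coe.symm
          _ < (Y z : EReal) := EReal.coe_lt_coe_iff.mpr hlt
    · intro c hc
      filter_upwards [stmt9_mem_comap hρpos] with z hz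
      have h := hYspec z (EReal.coe_pos.mp hz.1).le hz.2
      exact lt_trans h.1.2 hc
  have hTΩ : Tendsto (fun y : ℝ => (Ω y : EReal))
      (Filter.comap (fun y : ℝ => (y : EReal)) (nhdsWithin τ (Iio τ))) (nhds ρ) := by
    rw [tendsto_order]
    constructor
    · intro c hc
      obtain ⟨b, hb, hcb⟩ := lt_sSup_iff.mp hc
      obtain ⟨y₀', hy₀'S, rfl⟩ := hb
      filter_upwards [stmt9_mem_comap hy₀'S.2] with y hy
      have hyy : y₀' < y := EReal.coe_lt_coe_iff.mp hy.1
      have hyS : y ∈ S := ⟨hy₀'S.1.trans hyy.le, hy.2⟩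
      exact lt_trans hcb (EReal.coe_lt_coe_iff.mpr (hmono (hSsubJ hy₀'S) (hSsubJ hyS) hyy))
    · intro c hc
      filter_upwards [stmt9_mem_comap hτpos] with y hy
      have hyS : y ∈ S := ⟨(EReal.coe_pos.mp hy.1).le, hy.2⟩
      exact lt_of_le_of_lt (hle_ρ y hyS) hc
  exact ⟨ρ, hρpos, Y, hYan, hY0, hYmono, hprop, hTY, hTΩ⟩
end

section
/- For every α ∈ (0,π) there exists ρ₀ > 0 such that for all ρ ∈ (0,ρ₀), the sector D_{−ρ ln ρ, α} = { 0 < |w| < −ρ ln ρ, |Arg w| < α } is contained in the image under H(z) = −z log z of the slit disk D_{ρ,π} = { 0 < |z| < ρ, |Arg z| < π }. -/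
open Set Filter Topology

/-- The sector `D_{r,θ} = { z = ρ e^{iφ} : 0 < ρ < r, |φ| < θ }`. -/
def sector (r θ : ℝ) : Set ℂ := {z : ℂ | z ≠ 0 ∧ ‖z‖ < r ∧ |z.arg| < θ}

private lemma sector_pi_eq (ρ : ℝ) :
    sector ρ Real.pi = Metric.ball (0 : ℂ) ρ ∩ Complex.slitPlane := by
  ext z
  simp only [sector, mem_setOf_eq, mem_inter_iff, Metric.mem_ball, Complex.dist_eq, sub_zero]
  constructor
  · rintro ⟨hz, h1, h2⟩
    refine ⟨h1, Complex.mem_slitPlane_iff_arg.2 ⟨fun h => ?_, hz⟩⟩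
    rw [h, abs_of_pos Real.pi_pos] at h2
    exact lt_irrefl _ h2
  · rintro ⟨h1, h2⟩
    obtain ⟨hne, hz⟩ := Complex.mem_slitPlane_iff_arg.1 h2
    exact ⟨hz, h1, abs_lt.2 ⟨Complex.neg_pi_lt_arg z,
      lt_of_le_of_ne (Complex.arg_le_pi z) hne⟩⟩

private lemma isOpen_sector_pi (ρ : ℝ) : IsOpen (sector ρ Real.pi) := by
  rw [sector_pi_eq]; exact Metric.isOpen_ball.inter Complex.isOpen_slitPlane

private lemma sector_preconn {R θ : ℝ} (hθ : θ ≤ Real.pi) :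
    IsPreconnected (sector R θ) := by
  have h : sector R θ = (fun p : ℝ × ℝ => (p.1 : ℂ) * Complex.exp (p.2 * Complex.I)) ''
      (Set.Ioo 0 R ×ˢ Set.Ioo (-θ) θ) := by
    ext z
    constructor
    · rintro ⟨hz, h1, h2⟩
      obtain ⟨ha, hb⟩ := abs_lt.1 h2
      exact ⟨⟨‖z‖, z.arg⟩, ⟨⟨norm_pos_iff.mpr hz, h1⟩, ha, hb⟩,
        Complex.norm_mul_exp_arg_mul_I z⟩
    · rintro ⟨⟨r, φ⟩, ⟨⟨hr0, hrR⟩, hφ1, hφ2⟩, rfl⟩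
      have hφπ : φ ∈ Set.Ioc (-Real.pi) Real.pi :=
        ⟨lt_of_le_of_lt (neg_le_neg hθ) hφ1, le_trans hφ2.le hθ⟩
      have harg : ((r : ℂ) * Complex.exp (φ * Complex.I)).arg = φ := by
        rw [Complex.arg_real_mul _ hr0, Complex.exp_mul_I, Complex.arg_cos_add_sin_mul_I hφπ]
      have habs : ‖(r : ℂ) * Complex.exp (φ * Complex.I)‖ = r := by
        rw [norm_mul, Complex.norm_exp_ofReal_mul_I, Complex.norm_real, Real.norm_eq_abs, abs_of_pos hr0, mul_one]
      refine ⟨mul_ne_zero (Complex.ofReal_ne_zero.2 hr0.ne') (Complex.exp_ne_zero _),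
        by rw [habs]; exact hrR, by rw [harg]; exact abs_lt.2 ⟨hφ1, hφ2⟩⟩
  rw [h]
  exact (((convex_Ioo (0:ℝ) R).prod (convex_Ioo (-θ) θ)).isPreconnected).image _
    (Continuous.continuousOn (by continuity))

private lemma isOpen_image_H {ρ : ℝ} (hρ : ρ ≤ Real.exp (-2)) :
    IsOpen ((fun z : ℂ => -z * Complex.log z) '' sector ρ Real.pi) := by
  rw [isOpen_iff_mem_nhds]
  rintro w ⟨z, hz, rfl⟩
  have hzs : z ∈ Complex.slitPlane := ((sector_pi_eq ρ) ▸ hz).2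
  have hz0 : z ≠ 0 := hz.1
  have hd : HasDerivAt (fun z : ℂ => -z * Complex.log z) (-(Complex.log z + 1)) z := by
    have h1 := ((hasDerivAt_id z).neg.mul (Complex.hasDerivAt_log hzs))
    refine h1.congr_deriv ?_
    simp only [Pi.neg_apply, id, neg_mul, mul_inv_cancel₀ hz0]
    ring
  have ha : AnalyticAt ℂ (fun z : ℂ => -z * Complex.log z) z :=
    (analyticAt_id.neg.mul (analyticAt_clog hzs))
  obtain ⟨p, hp⟩ := ha
  have hs : HasStrictDerivAt (fun z : ℂ => -z * Complex.log z) (-(Complex.log z + 1)) z := by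
    have h2 := hp.hasStrictDerivAt
    rwa [hd.unique h2.hasDerivAt]
  have hne : -(Complex.log z + 1) ≠ 0 := by
    intro h
    have hlog : Complex.log z = -1 := by linear_combination -h
    have hz' : z = Complex.exp (-1) := by rw [← Complex.exp_log hz0, hlog]
    have habs : ‖z‖ = Real.exp (-1) := by
      rw [hz', Complex.norm_exp]; norm_num
    have h2 : ‖z‖ < Real.exp (-2) := lt_of_lt_of_le hz.2.1 hρ
    rw [habs] at h2
    exact absurd h2 (not_lt.2 (Real.exp_le_exp.2 (by norm_num)))
  rw [← hs.map_nhds_eq hne]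
  exact Filter.image_mem_map ((isOpen_sector_pi ρ).mem_nhds hz)

private lemma not_small_arg {a c α : ℝ} (ha : 0 < a) (hc : |c| ≤ Real.pi)
    (hαπ : α < Real.pi)
    (hcond : Real.arctan (Real.pi / a) < Real.pi - α)
    (ξ : ℂ) (hre : ξ.re = -a) (him : ξ.im = c) : ¬ (|ξ.arg| < α) := by
  intro hlt
  have hα0 : 0 ≤ α := le_trans (abs_nonneg _) hlt.le
  have hξ0 : ξ ≠ 0 := fun h => by rw [h] at hre; simp at hre; linarith
  have habs : ‖ξ‖ = Real.sqrt (a^2 + c^2) := by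
    rw [Complex.norm_def, Complex.normSq_apply, hre, him]; ring_nf
  have hcos : Real.cos |ξ.arg| = -a / Real.sqrt (a^2 + c^2) := by
    rw [Real.cos_abs, Complex.cos_arg hξ0, hre, habs]
  have hπa : Real.cos (Real.pi - Real.arctan (Real.pi/a)) = -(1/Real.sqrt (1+(Real.pi/a)^2)) := by
    rw [Real.cos_pi_sub, Real.cos_arctan]
  have hsq : Real.sqrt (1 + (Real.pi/a)^2) = Real.sqrt (a^2 + Real.pi^2) / a := by
    have h1 : 1 + (Real.pi/a)^2 = (a^2 + Real.pi^2)/a^2 := by field_simp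
    rw [h1, Real.sqrt_div (by positivity), Real.sqrt_sq ha.le]
  have hkey : -a / Real.sqrt (a^2+c^2) ≤ -(1 / Real.sqrt (1+(Real.pi/a)^2)) := by
    rw [hsq, one_div_div, neg_div, neg_le_neg_iff]
    have hle : Real.sqrt (a^2+c^2) ≤ Real.sqrt (a^2+Real.pi^2) :=
      Real.sqrt_le_sqrt (by nlinarith [sq_abs c, abs_nonneg c, Real.pi_pos])
    have hpos1 : (0:ℝ) < Real.sqrt (a^2+c^2) := by positivity
    exact div_le_div_of_nonneg_left ha.le hpos1 hle
  have h2 : Real.cos α < Real.cos |ξ.arg| :=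
    Real.strictAntiOn_cos ⟨abs_nonneg _, Complex.abs_arg_le_pi ξ⟩ ⟨hα0, hαπ.le⟩ hlt
  have h3 : Real.cos (Real.pi - Real.arctan (Real.pi/a)) < Real.cos α := by
    have harct : 0 ≤ Real.arctan (Real.pi/a) := by
      rw [← Real.arctan_zero]
      exact Real.arctan_strictMono.monotone (by positivity)
    exact Real.strictAntiOn_cos ⟨hα0, hαπ.le⟩
      ⟨by linarith [Real.arctan_lt_pi_div_two (Real.pi/a), Real.pi_pos], by linarith⟩
      (by linarith)
  rw [hcos] at h2
  rw [hπa] at h3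
  linarith

private lemma closure_subset_image {α ρ : ℝ} (hα : α ∈ Set.Ioo 0 Real.pi)
    (hρ0 : 0 < ρ) (hρe : ρ < Real.exp (-2))
    (hcond : ∀ t : ℝ, 0 < t → t < ρ → Real.arctan (Real.pi / (-Real.log t)) < Real.pi - α) :
    closure ((fun z : ℂ => -z * Complex.log z) '' sector ρ Real.pi) ∩ sector (-ρ * Real.log ρ) α
      ⊆ (fun z : ℂ => -z * Complex.log z) '' sector ρ Real.pi := by
  have hρ1 : ρ < 1 := hρe.trans (Real.exp_lt_one_iff.2 (by norm_num))
  have hlogρ : Real.log ρ < 0 := Real.log_neg hρ0 hρ1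
  rintro w ⟨hwc, hw0, hwR, hwa⟩
  set f : ℂ → ℂ := fun z => -z * Complex.log z with hf
  obtain ⟨u, hu, hul⟩ := mem_closure_iff_seq_limit.1 hwc
  choose z hzs hzf using hu
  have hzb : ∀ n, z n ∈ Metric.closedBall (0:ℂ) ρ := fun n => by
    simpa [Complex.dist_eq] using ((hzs n).2.1).le
  obtain ⟨ζ, hζb, φ, hφ, hζl⟩ := (isCompact_closedBall (0:ℂ) ρ).tendsto_subseq hzb
  have hfl : Tendsto (fun n => f (z (φ n))) atTop (𝓝 w) := by
    have heq : (fun n => f (z (φ n))) = u ∘ φ := funext fun n => hzf (φ n)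
    rw [heq]; exact hul.comp hφ.tendsto_atTop
  have habsl : Tendsto (fun n => ‖z (φ n)‖) atTop (𝓝 (‖ζ‖)) :=
    (continuous_norm.tendsto ζ).comp hζl
  have habsfl : Tendsto (fun n => ‖f (z (φ n))‖) atTop (𝓝 (‖w‖)) :=
    (continuous_norm.tendsto w).comp hfl
  have hzn0 : ∀ n, z n ≠ 0 := fun n => (hzs n).1
  by_cases hmem : ζ ∈ sector ρ Real.pi
  · -- interior point: continuity
    have hζs : ζ ∈ Complex.slitPlane := ((sector_pi_eq ρ) ▸ hmem).2
    have hc : ContinuousAt f ζ := (continuousAt_id.neg.mul (continuousAt_clog hζs))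
    have : Tendsto (fun n => f (z (φ n))) atTop (𝓝 (f ζ)) := (hc.tendsto).comp hζl
    exact ⟨ζ, hmem, (tendsto_nhds_unique hfl this).symm⟩
  · exfalso
    have hζρ : ‖ζ‖ ≤ ρ := by
      simpa [Complex.dist_eq] using hζb
    by_cases hbdry : ‖ζ‖ = ρ
    · -- boundary circle
      have hlow : ∀ n, ‖z (φ n)‖ * |Real.log (‖z (φ n)‖)|
          ≤ ‖f (z (φ n))‖ := by
        intro n
        have h1 : ‖f (z (φ n))‖
            = ‖z (φ n)‖ * ‖Complex.log (z (φ n))‖ := by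
          simp [hf]
        rw [h1]
        have h2 : |Real.log (‖z (φ n)‖)| ≤ ‖Complex.log (z (φ n))‖ := by
          have := Complex.abs_re_le_norm (Complex.log (z (φ n)))
          rwa [Complex.log_re] at this
        exact mul_le_mul_of_nonneg_left h2 (norm_nonneg _)
      have hll : Tendsto (fun n => ‖z (φ n)‖ * |Real.log (‖z (φ n)‖)|)
          atTop (𝓝 (ρ * |Real.log ρ|)) := by
        rw [← hbdry]
        exact habsl.mul ((continuous_abs.tendsto _).comp
          ((Real.continuousAt_log (by rw [hbdry]; exact hρ0.ne')).tendsto.comp habsl))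
      have hle : ρ * |Real.log ρ| ≤ ‖w‖ := le_of_tendsto_of_tendsto' hll habsfl hlow
      rw [abs_of_neg hlogρ] at hle
      have : ‖w‖ < -ρ * Real.log ρ := hwR
      linarith [this, hle]
    · have hζρ' : ‖ζ‖ < ρ := lt_of_le_of_ne hζρ hbdry
      by_cases hζ0 : ζ = 0
      · -- limit zero
        have hbound : ∀ n, ‖f (z (φ n))‖
            ≤ Real.pi * ‖z (φ n)‖
              + -(Real.log (‖z (φ n)‖) * ‖z (φ n)‖) := by
          intro n
          have h1 : ‖f (z (φ n))‖
              = ‖z (φ n)‖ * ‖Complex.log (z (φ n))‖ := by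
            simp [hf]
          have h2 : ‖Complex.log (z (φ n))‖
              ≤ |Real.log (‖z (φ n)‖)| + Real.pi := by
            have h3 := Complex.norm_le_abs_re_add_abs_im (Complex.log (z (φ n)))
            rw [Complex.log_re, Complex.log_im] at h3
            exact h3.trans (add_le_add_right (Complex.abs_arg_le_pi (z (φ n))) _)
          have h4 : |Real.log (‖z (φ n)‖)| = -Real.log (‖z (φ n)‖) := by
            apply abs_of_neg
            apply Real.log_neg (norm_pos_iff.mpr (hzn0 (φ n)))
            exact lt_trans (hzs (φ n)).2.1 hρ1
          rw [h4] at h2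
          have hz0' : (0:ℝ) ≤ ‖z (φ n)‖ := norm_nonneg _
          have h6 := mul_le_mul_of_nonneg_left h2 hz0'
          rw [h1]
          nlinarith [h6]
        have htz : Tendsto (fun n => ‖z (φ n)‖) atTop (𝓝[>] 0) := by
          rw [tendsto_nhdsWithin_iff]
          constructor
          · rw [hζ0] at habsl; simpa using habsl
          · exact Eventually.of_forall fun n => norm_pos_iff.mpr (hzn0 (φ n))
        have hml : Tendsto (fun x : ℝ => Real.pi * x + -(Real.log x * x)) (𝓝[>] 0) (𝓝 0) := by
          have h1 : Tendsto (fun x : ℝ => Real.log x * x) (𝓝[>] 0) (𝓝 0) := by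
            have := tendsto_log_mul_rpow_nhdsGT_zero (r := 1) one_pos
            refine this.congr (fun x => by rw [Real.rpow_one])
          have h2 : Tendsto (fun x : ℝ => Real.pi * x) (𝓝[>] 0) (𝓝 0) := by
            have : Tendsto (fun x : ℝ => Real.pi * x) (𝓝 0) (𝓝 (Real.pi * 0)) :=
              (continuous_const.mul continuous_id).tendsto 0
            rw [mul_zero] at this
            exact this.mono_left nhdsWithin_le_nhds
          simpa using h2.add h1.neg
        have habs0 : ‖w‖ ≤ 0 := by
          refine le_of_tendsto_of_tendsto' habsfl (hml.comp htz) hbound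
        exact hw0 (norm_eq_zero.1 (le_antisymm habs0 (norm_nonneg w)))
      · -- negative real axis
        have hargζ : ζ.arg = Real.pi := by
          by_contra hne
          apply hmem
          refine ⟨hζ0, hζρ', abs_lt.2 ⟨Complex.neg_pi_lt_arg ζ,
            lt_of_le_of_ne (Complex.arg_le_pi ζ) hne⟩⟩
        obtain ⟨hre, him⟩ := Complex.arg_eq_pi_iff.1 hargζ
        set t : ℝ := ‖ζ‖ with ht
        have ht0 : 0 < t := norm_pos_iff.mpr hζ0
        have htρ : t < ρ := hζρ'
        have hζre : ζ = ((-t : ℝ) : ℂ) := by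
          have : t = -ζ.re := by
            rw [ht, Complex.norm_def, Complex.normSq_apply, him]
            rw [mul_zero, add_zero, Real.sqrt_mul_self_eq_abs, abs_of_neg hre]
          apply Complex.ext
          · simp [this]
          · simp [him]
        -- log (z (φ n)) tends to -w / ζ
        have hlogeq : ∀ n, Complex.log (z (φ n)) = -f (z (φ n)) / z (φ n) := by
          intro n
          have hzz := hzn0 (φ n)
          rw [hf]
          have : -(-(z (φ n)) * Complex.log (z (φ n))) / z (φ n)
              = Complex.log (z (φ n)) := by
            field_simp
          exact this.symm
        have hlogl : Tendsto (fun n => Complex.log (z (φ n))) atTop (𝓝 (-w / ζ)) := by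
          simp only [hlogeq]
          exact (hfl.neg).div hζl hζ0
        -- real and imaginary parts
        set c : ℝ := (-w / ζ).im with hc
        have hargl : Tendsto (fun n => (z (φ n)).arg) atTop (𝓝 c) := by
          have h5 := (Complex.continuous_im.tendsto _).comp hlogl
          rw [hc]
          simpa only [Function.comp_def, Complex.log_im] using h5
        have hcπ : |c| ≤ Real.pi := by
          rw [abs_le]
          constructor
          · exact ge_of_tendsto hargl (Eventually.of_forall fun n =>
              (Complex.neg_pi_lt_arg (z (φ n))).le)
          · exact le_of_tendsto hargl (Eventually.of_forall fun n =>
              Complex.arg_le_pi (z (φ n)))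
        have hrel : Tendsto (fun n => Real.log (‖z (φ n)‖)) atTop (𝓝 ((-w / ζ).re)) := by
          have h5 := (Complex.continuous_re.tendsto _).comp hlogl
          simpa only [Function.comp_def, Complex.log_re] using h5
        have hrel' : Tendsto (fun n => Real.log (‖z (φ n)‖)) atTop (𝓝 (Real.log t)) :=
          (Real.continuousAt_log ht0.ne').tendsto.comp habsl
        have hrec : (-w / ζ).re = Real.log t := tendsto_nhds_unique hrel hrel'
        -- reconstruct w
        have hwt : w = (t : ℂ) * (((Real.log t : ℝ) : ℂ) + (c : ℂ) * Complex.I) := by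
          have h1 : -w / ζ = ((Real.log t : ℝ) : ℂ) + (c : ℂ) * Complex.I := by
            rw [← Complex.re_add_im (-w / ζ), hrec, hc]
          have h2 : -w = ζ * (((Real.log t : ℝ) : ℂ) + (c : ℂ) * Complex.I) := by
            rw [← h1]
            field_simp
          rw [hζre] at h2
          have : w = -(((-t : ℝ) : ℂ) * (((Real.log t : ℝ) : ℂ) + (c : ℂ) * Complex.I)) := by
            linear_combination -h2
          rw [this]
          push_cast
          ring
        -- now derive contradiction from the argument bound
        have hlt : Real.log t < 0 := Real.log_neg ht0 (htρ.trans hρ1)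
        have harg : w.arg = (((Real.log t : ℝ) : ℂ) + (c : ℂ) * Complex.I).arg := by
          rw [hwt, Complex.arg_real_mul _ ht0]
        refine not_small_arg (a := -Real.log t) (c := c) (by linarith) hcπ hα.2 ?_
          (((Real.log t : ℝ) : ℂ) + (c : ℂ) * Complex.I) (by simp) (by simp) ?_
        · have := hcond t ht0 htρ
          simpa using this
        · rw [← harg]; exact hwa

private lemma sector_nonempty_inter_aux {ρ α : ℝ} (hρ0 : 0 < ρ) (hρe : ρ < Real.exp (-2)) (hα : 0 < α) :
    (sector (-ρ * Real.log ρ) α ∩ (fun z : ℂ => -z * Complex.log z) '' sector ρ Real.pi).Nonempty := by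
  have hρ1 : ρ < 1 := hρe.trans (Real.exp_lt_one_iff.2 (by norm_num))
  have hρhalf : ρ < 1/2 := by
    have h1 : (1:ℝ) + 1 ≤ Real.exp 1 := by
      have := Real.add_one_le_exp (1:ℝ)
      linarith
    have h2 : Real.exp (-2) < Real.exp (-1) := Real.exp_lt_exp.2 (by norm_num)
    have h3 : Real.exp (-1) ≤ 1/2 := by
      rw [Real.exp_neg]
      have h5 : (Real.exp 1)⁻¹ * Real.exp 1 = 1 := inv_mul_cancel₀ (Real.exp_pos 1).ne'
      nlinarith [inv_pos.2 (Real.exp_pos 1), h5, h1]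
    linarith
  have hlogρ : Real.log ρ < 0 := Real.log_neg hρ0 hρ1
  set z : ℂ := ((ρ^2 : ℝ) : ℂ) with hz
  have hzs : z ∈ sector ρ Real.pi := by
    refine ⟨Complex.ofReal_ne_zero.2 (by positivity), ?_, ?_⟩
    · rw [Complex.norm_real, Real.norm_eq_abs, abs_of_pos (by positivity)]
      nlinarith
    · rw [Complex.arg_ofReal_of_nonneg (by positivity)]
      simpa using Real.pi_pos
  refine ⟨(fun z : ℂ => -z * Complex.log z) z, ?_, ⟨z, hzs, rfl⟩⟩
  have himg : (fun z : ℂ => -z * Complex.log z) z = (((-(ρ^2) * Real.log (ρ^2) : ℝ)) : ℂ) := by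
    show -z * Complex.log z = _
    rw [hz, ← Complex.ofReal_log (by positivity)]
    push_cast
    ring
  rw [himg]
  have hval : -(ρ^2) * Real.log (ρ^2) = ρ^2 * (-2 * Real.log ρ) := by
    rw [show (ρ^2) = ρ^(2:ℕ) by norm_num, Real.log_pow]
    push_cast
    ring
  have hpos : 0 < -(ρ^2) * Real.log (ρ^2) := by
    rw [hval]; nlinarith [mul_pos (mul_pos hρ0 hρ0) (neg_pos.2 hlogρ)]
  refine ⟨Complex.ofReal_ne_zero.2 hpos.ne', ?_, ?_⟩
  · rw [Complex.norm_real, Real.norm_eq_abs, abs_of_pos hpos, hval]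
    nlinarith
  · rw [Complex.arg_ofReal_of_nonneg hpos.le]
    simpa using hα

/-- For each `α ∈ (0,π)` there is `ρ₀ > 0` such that for all `ρ ∈ (0,ρ₀)` the sector
`D_{-ρ ln ρ, α}` is contained in the image of the slit disk `D_{ρ,π}` under
`H(z) = -z log z`. -/
theorem stmt11 (α : ℝ) (hα : α ∈ Set.Ioo 0 Real.pi) :
    ∃ ρ₀ > (0 : ℝ), ∀ ρ ∈ Set.Ioo (0 : ℝ) ρ₀,
      sector (-ρ * Real.log ρ) α ⊆ (fun z : ℂ => -z * Complex.log z) '' sector ρ Real.pi := by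
  refine ⟨min (Real.exp (-2)) (Real.exp (-Real.pi / Real.tan (Real.pi - α))), by positivity, ?_⟩
  intro ρ hρ
  obtain ⟨hρ0, hρlt⟩ := hρ
  have hρe : ρ < Real.exp (-2) := hρlt.trans_le (min_le_left _ _)
  have hρtan : ρ < Real.exp (-Real.pi / Real.tan (Real.pi - α)) :=
    hρlt.trans_le (min_le_right _ _)
  have hcond : ∀ t : ℝ, 0 < t → t < ρ → Real.arctan (Real.pi / (-Real.log t)) < Real.pi - α := by
    intro t ht0 htρ
    have htr : t < Real.exp (-2) := htρ.trans hρe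
    have hlogt : Real.log t < -2 := by
      have := Real.log_lt_log ht0 htr
      rwa [Real.log_exp] at this
    have hpos : (0:ℝ) < -Real.log t := by linarith
    by_cases hcase : Real.pi - α < Real.pi / 2
    · -- need arctan (π / (-log t)) < π - α via tan comparison
      have hβ0 : 0 < Real.pi - α := by linarith [hα.2]
      have htanβ : 0 < Real.tan (Real.pi - α) :=
        Real.tan_pos_of_pos_of_lt_pi_div_two hβ0 hcase
      have hlt2 : t < Real.exp (-Real.pi / Real.tan (Real.pi - α)) := htρ.trans hρtan
      have hloglt : Real.log t < -Real.pi / Real.tan (Real.pi - α) := by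
        have := Real.log_lt_log ht0 hlt2
        rwa [Real.log_exp] at this
      have hineq : Real.pi / (-Real.log t) < Real.tan (Real.pi - α) := by
        rw [div_lt_iff₀ hpos]
        rw [lt_div_iff₀ htanβ] at hloglt
        nlinarith
      calc Real.arctan (Real.pi / (-Real.log t)) < Real.arctan (Real.tan (Real.pi - α)) :=
              Real.arctan_strictMono hineq
        _ = Real.pi - α := Real.arctan_tan (by linarith [Real.pi_pos]) hcase
    · push_neg at hcase
      exact lt_of_lt_of_le (Real.arctan_lt_pi_div_two _) hcase
  -- clopen argument
  apply IsPreconnected.subset_of_closure_inter_subset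
  · exact sector_preconn hα.2.le
  · exact isOpen_image_H hρe.le
  · have := sector_nonempty_inter_aux hρ0 hρe hα.1
    exact this
  · exact closure_subset_image hα hρ0 hρe hcond
end

section
/- Let T be a finite tree with at least one edge and let 𝓕 be a stable set of spanning forests of T. Then every forest in 𝓕 has the same number f of flippable edges, and the generating polynomial A(u) = Σ_{F ∈ 𝓕} u^{c(F)} (where c(F) is the number of connected components of F) equals u(1+u)^f. -/
open SimpleGraph Finset

lemma reachCases {V : Type} (G : SimpleGraph V) (a b : V)
    (hnr : ¬ G.Reachable a b) {x y : V}
    (h : (G ⊔ SimpleGraph.fromEdgeSet {s(a,b)}).Reachable x y) :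
    G.Reachable x y ∨ (G.Reachable x a ∧ G.Reachable b y) ∨
      (G.Reachable x b ∧ G.Reachable a y) := by
  obtain ⟨w⟩ := h
  induction w with
  | nil => exact Or.inl (Reachable.refl _)
  | @cons x z y h w ih =>
    rcases (sup_adj _ _ _ _).mp h with h' | h'
    · rcases ih with h1 | ⟨h1, h2⟩ | ⟨h1, h2⟩
      · exact Or.inl (h'.reachable.trans h1)
      · exact Or.inr (Or.inl ⟨h'.reachable.trans h1, h2⟩)
      · exact Or.inr (Or.inr ⟨h'.reachable.trans h1, h2⟩)
    · rw [fromEdgeSet_adj] at h'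
      obtain ⟨he, hne⟩ := h'
      rw [Set.mem_singleton_iff, Sym2.eq_iff] at he
      rcases he with ⟨rfl, rfl⟩ | ⟨rfl, rfl⟩
      · rcases ih with h1 | ⟨h1, h2⟩ | ⟨h1, h2⟩
        · exact Or.inr (Or.inl ⟨Reachable.refl _, h1⟩)
        · exact absurd h1.symm hnr
        · exact Or.inl h2
      · rcases ih with h1 | ⟨h1, h2⟩ | ⟨h1, h2⟩
        · exact Or.inr (Or.inr ⟨Reachable.refl _, h1⟩)
        · exact Or.inl h2
        · exact absurd h1 hnr


lemma cardCCsup {V : Type} [Fintype V] (G : SimpleGraph V) (a b : V) (hab : a ≠ b)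
    (hnr : ¬ G.Reachable a b) :
    Nat.card G.ConnectedComponent
      = Nat.card (G ⊔ SimpleGraph.fromEdgeSet {s(a,b)}).ConnectedComponent + 1 := by
  classical
  set G' := G ⊔ SimpleGraph.fromEdgeSet {s(a,b)} with hG'
  have hle : G ≤ G' := le_sup_left
  have hab' : G'.Adj a b := by
    refine Or.inr ?_
    rw [fromEdgeSet_adj]
    exact ⟨rfl, hab⟩
  have : Fintype G.ConnectedComponent := Fintype.ofFinite _
  have : Fintype G'.ConnectedComponent := Fintype.ofFinite _
  set g : G.ConnectedComponent → G'.ConnectedComponent :=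
    SimpleGraph.ConnectedComponent.map (SimpleGraph.Hom.ofLE hle) with hg
  have hgmk : ∀ v : V, g (G.connectedComponentMk v) = G'.connectedComponentMk v :=
    fun v => rfl
  -- reachability characterization of fibers
  have key : ∀ x y : V, G'.Reachable x y →
      G.Reachable x y ∨ (G.Reachable x a ∧ G.Reachable b y) ∨
        (G.Reachable x b ∧ G.Reachable a y) := fun x y h => reachCases G a b hnr h
  rw [Nat.card_eq_fintype_card, Nat.card_eq_fintype_card]
  have hfib : Fintype.card G.ConnectedComponent =
      ∑ c' : G'.ConnectedComponent, (Finset.univ.filter fun C => g C = c').card :=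
    Finset.card_eq_sum_card_fiberwise (fun x _ => Finset.mem_univ (g x))
  rw [hfib]
  have hcard : ∀ c' : G'.ConnectedComponent,
      (Finset.univ.filter fun C => g C = c').card =
        if c' = g (G.connectedComponentMk a) then 2 else 1 := by
    refine SimpleGraph.ConnectedComponent.ind ?_
    intro x
    by_cases hx : G'.Reachable x a
    · rw [if_pos]
      · have : (Finset.univ.filter fun C => g C = G'.connectedComponentMk x) =
            {G.connectedComponentMk a, G.connectedComponentMk b} := by
          ext C
          induction C using SimpleGraph.ConnectedComponent.ind with
          | _ y =>
          simp only [Finset.mem_filter, Finset.mem_univ, true_and, Finset.mem_insert,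
            Finset.mem_singleton, hgmk, SimpleGraph.ConnectedComponent.eq]
          constructor
          · intro hyx
            rcases key y a (hyx.trans hx) with h1 | ⟨h1, h2⟩ | ⟨h1, h2⟩
            · exact Or.inl h1
            · exact absurd h2.symm hnr
            · exact Or.inr h1
          · rintro (h1 | h1)
            · exact (h1.mono hle).trans hx.symm
            · exact (h1.mono hle).trans (hab'.symm.reachable.trans hx.symm)
        rw [this, Finset.card_insert_of_notMem, Finset.card_singleton]
        simp only [Finset.mem_singleton, SimpleGraph.ConnectedComponent.eq]
        exact hnr
      · rw [hgmk]
        exact SimpleGraph.ConnectedComponent.eq.mpr hx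
    · rw [if_neg]
      · have : (Finset.univ.filter fun C => g C = G'.connectedComponentMk x) =
            {G.connectedComponentMk x} := by
          ext C
          induction C using SimpleGraph.ConnectedComponent.ind with
          | _ y =>
          simp only [Finset.mem_filter, Finset.mem_univ, true_and, Finset.mem_singleton,
            hgmk, SimpleGraph.ConnectedComponent.eq]
          constructor
          · intro hyx
            rcases key y x hyx with h1 | ⟨h1, h2⟩ | ⟨h1, h2⟩
            · exact h1
            · exact absurd ((h2.mono hle).symm.trans hab'.symm.reachable) hx
            · exact absurd (h2.mono hle).symm hx
          · intro h1
            exact h1.mono hle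
        rw [this, Finset.card_singleton]
      · rw [hgmk]
        intro h
        exact hx (SimpleGraph.ConnectedComponent.eq.mp h.symm).symm
  calc ∑ c' : G'.ConnectedComponent, (Finset.univ.filter fun C => g C = c').card
      = ∑ c' : G'.ConnectedComponent,
          ((if c' = g (G.connectedComponentMk a) then 1 else 0) + 1) := by
        refine Finset.sum_congr rfl fun c' _ => ?_
        rw [hcard c']
        split_ifs <;> rfl
    _ = Fintype.card G'.ConnectedComponent + 1 := by
        rw [Finset.sum_add_distrib, Finset.sum_ite_eq' Finset.univ, Finset.sum_const,
          if_pos (Finset.mem_univ _), Finset.card_univ, smul_eq_mul, mul_one, add_comm]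


lemma cardCCbot {V : Type} [Fintype V] :
    Nat.card (⊥ : SimpleGraph V).ConnectedComponent = Fintype.card V := by
  rw [Nat.card_eq_fintype_card]
  refine (Fintype.card_of_bijective (f := (⊥ : SimpleGraph V).connectedComponentMk) ⟨?_, ?_⟩).symm
  · intro u v h
    exact (SimpleGraph.reachable_bot).mp (SimpleGraph.ConnectedComponent.eq.mp h)
  · exact SimpleGraph.ConnectedComponent.ind fun v => ⟨v, rfl⟩

lemma forestCard {V : Type} [Fintype V] [DecidableEq V] (T : SimpleGraph V)
    (hT : T.IsAcyclic) (F : Finset (Sym2 V)) (hF : ↑F ⊆ T.edgeSet) :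
    Nat.card (SimpleGraph.fromEdgeSet (↑F : Set (Sym2 V))).ConnectedComponent + F.card
      = Fintype.card V := by
  classical
  induction F using Finset.induction_on with
  | empty =>
    simp only [Finset.coe_empty, SimpleGraph.fromEdgeSet_empty, Finset.card_empty, add_zero]
    exact cardCCbot
  | @insert e F he ih =>
    revert hF
    induction e using Sym2.ind with
    | _ a b =>
    intro hF
    have hmemT : s(a, b) ∈ T.edgeSet := hF (by simp)
    have hFsub : ↑F ⊆ T.edgeSet := fun x hx => hF (by simp [hx])
    have hadj : T.Adj a b := T.mem_edgeSet.mp hmemT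
    have hab : a ≠ b := hadj.ne
    have hnr : ¬ (SimpleGraph.fromEdgeSet (↑F : Set (Sym2 V))).Reachable a b := by
      intro hr
      have hbridge := (SimpleGraph.isAcyclic_iff_forall_adj_isBridge.mp hT) hadj
      have hle : SimpleGraph.fromEdgeSet (↑F : Set (Sym2 V)) ≤
          T \ SimpleGraph.fromEdgeSet {s(a, b)} := by
        intro x y hxy
        rw [SimpleGraph.fromEdgeSet_adj] at hxy
        obtain ⟨hmem, hne⟩ := hxy
        refine ⟨T.mem_edgeSet.mp (hFsub hmem), ?_⟩
        rw [SimpleGraph.fromEdgeSet_adj]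
        rintro ⟨h1, -⟩
        rw [Set.mem_singleton_iff] at h1
        exact he (h1 ▸ hmem)
      exact hbridge (hr.mono hle)
    have hcoe : (↑(insert s(a, b) F) : Set (Sym2 V)) = ↑F ∪ {s(a, b)} := by
      rw [Finset.coe_insert, Set.insert_eq, Set.union_comm]
    rw [hcoe, SimpleGraph.fromEdgeSet_union, Finset.card_insert_of_notMem he]
    have h1 := cardCCsup (SimpleGraph.fromEdgeSet (↑F : Set (Sym2 V))) a b hab hnr
    have h2 := ih hFsub
    omega


lemma symmDiff_not_mem {α : Type*} [DecidableEq α] {F : Finset α} {e : α} (h : e ∉ F) :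
    symmDiff F {e} = insert e F := by
  ext x
  simp only [Finset.mem_symmDiff, Finset.mem_singleton, Finset.mem_insert]
  by_cases hx : x = e <;> subst_eqs <;> tauto

lemma symmDiff_mem {α : Type*} [DecidableEq α] {F : Finset α} {e : α} (h : e ∈ F) :
    symmDiff F {e} = F.erase e := by
  ext x
  simp only [Finset.mem_symmDiff, Finset.mem_singleton, Finset.mem_erase]
  by_cases hx : x = e <;> subst_eqs <;> tauto


/-- The number of connected components of the spanning subgraph with edge set `F`. -/
noncomputable def compCount {V : Type*} (F : Set (Sym2 V)) : ℕ :=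
  Nat.card (SimpleGraph.fromEdgeSet F).ConnectedComponent


/-- Let `T` be a finite tree with at least one edge, and let `𝓕` be a nonempty stable
set of spanning forests of `T` (forests = subsets of the edge set of `T`; an edge `e` is
flippable for `F ∈ 𝓕` if the symmetric difference `F Δ {e}` is again in `𝓕`; stability:
every edge outside `F` is flippable, and flipping a flippable edge preserves the set of
flippable edges). Then all members of `𝓕` have the same number `f` of flippable edges,
and `Σ_{F ∈ 𝓕} u^{c(F)} = u (1+u)^f` where `c(F)` is the number of components of the
spanning subgraph `(V(T), F)`. -/
theorem stmt12 {V : Type} [Fintype V] [DecidableEq V]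
    (T : SimpleGraph V) [DecidableRel T.Adj] (hT : T.IsTree)
    (hE : T.edgeFinset.Nonempty)
    (𝓕 : Finset (Finset (Sym2 V))) (h𝓕 : 𝓕.Nonempty)
    (hsub : ∀ F ∈ 𝓕, F ⊆ T.edgeFinset)
    (hstable1 : ∀ F ∈ 𝓕, ∀ e ∈ T.edgeFinset, e ∉ F → symmDiff F {e} ∈ 𝓕)
    (hstable2 : ∀ F ∈ 𝓕, ∀ e ∈ T.edgeFinset, symmDiff F {e} ∈ 𝓕 →
      ∀ e' ∈ T.edgeFinset, (symmDiff F {e'} ∈ 𝓕 ↔ symmDiff (symmDiff F {e}) {e'} ∈ 𝓕)) :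
    ∃ f : ℕ,
      (∀ F ∈ 𝓕, (T.edgeFinset.filter fun e => symmDiff F {e} ∈ 𝓕).card = f) ∧
      ∀ u : ℝ, (∑ F ∈ 𝓕, u ^ compCount (F : Set (Sym2 V))) = u * (1 + u) ^ f := by
  set E := T.edgeFinset with hEdef
  -- flipping preserves the flip set
  have hSstep : ∀ F ∈ 𝓕, ∀ e ∈ E, symmDiff F {e} ∈ 𝓕 →
      (E.filter fun e' => symmDiff (symmDiff F {e}) {e'} ∈ 𝓕) =
        (E.filter fun e' => symmDiff F {e'} ∈ 𝓕) := by
    intro F hF e he hfe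
    ext e'
    simp only [Finset.mem_filter]
    exact and_congr_right fun he' => (hstable2 F hF e he hfe e' he').symm
  -- every member can be grown to the full edge set, preserving the flip set
  have hup : ∀ n : ℕ, ∀ F ∈ 𝓕, (E \ F).card ≤ n → E ∈ 𝓕 ∧
      (E.filter fun e => symmDiff F {e} ∈ 𝓕) =
        (E.filter fun e => symmDiff E {e} ∈ 𝓕) := by
    intro n
    induction n with
    | zero =>
      intro F hF h0
      have hFE : F = E := by
        have : E \ F = ∅ := Finset.card_eq_zero.mp (Nat.le_zero.mp h0)
        exact Finset.Subset.antisymm (hsub F hF) (Finset.sdiff_eq_empty_iff_subset.mp this)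
      subst hFE
      exact ⟨hF, rfl⟩
    | succ n ih =>
      intro F hF hcard
      rcases Finset.eq_empty_or_nonempty (E \ F) with hEF | ⟨e, he⟩
      · have hFE : F = E :=
          Finset.Subset.antisymm (hsub F hF) (Finset.sdiff_eq_empty_iff_subset.mp hEF)
        subst hFE
        exact ⟨hF, rfl⟩
      · obtain ⟨heE, heF⟩ := Finset.mem_sdiff.mp he
        have h1 : symmDiff F {e} ∈ 𝓕 := hstable1 F hF e heE heF
        have h2 := hSstep F hF e heE h1
        have h3 : symmDiff F {e} = insert e F := symmDiff_not_mem heF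
        have hcard' : (E \ insert e F).card ≤ n := by
          have : E \ insert e F = (E \ F).erase e := by
            ext x
            simp only [Finset.mem_sdiff, Finset.mem_insert, Finset.mem_erase]
            tauto
          rw [this, Finset.card_erase_of_mem he]
          omega
        obtain ⟨hE𝓕, hS⟩ := ih (insert e F) (h3 ▸ h1) hcard'
        refine ⟨hE𝓕, ?_⟩
        rw [← hS, ← h2, h3]
  obtain ⟨F₀, hF₀⟩ := h𝓕
  have hEmem : E ∈ 𝓕 := (hup (E \ F₀).card F₀ hF₀ le_rfl).1
  set Sc := E.filter fun e => symmDiff E {e} ∈ 𝓕 with hScdef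
  have hSconst : ∀ F ∈ 𝓕, (E.filter fun e => symmDiff F {e} ∈ 𝓕) = Sc :=
    fun F hF => (hup (E \ F).card F hF le_rfl).2
  have hScE : Sc ⊆ E := Finset.filter_subset _ _
  set C := E \ Sc with hCdef
  have hCsub : ∀ F ∈ 𝓕, C ⊆ F := by
    intro F hF x hx
    obtain ⟨hxE, hxS⟩ := Finset.mem_sdiff.mp hx
    by_contra hxF
    apply hxS
    rw [← hSconst F hF] at *
    exact Finset.mem_filter.mpr ⟨hxE, hstable1 F hF x hxE hxF⟩
  have hdown : ∀ F ∈ 𝓕, ∀ e ∈ Sc, e ∈ F → F.erase e ∈ 𝓕 := by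
    intro F hF e heS heF
    have : e ∈ E.filter fun e' => symmDiff F {e'} ∈ 𝓕 := by rw [hSconst F hF]; exact heS
    have h1 := (Finset.mem_filter.mp this).2
    rwa [symmDiff_mem heF] at h1
  have hmemD : ∀ D ⊆ Sc, E \ D ∈ 𝓕 := by
    intro D
    induction D using Finset.induction_on with
    | empty => intro _; simpa using hEmem
    | @insert e D he ihD =>
      intro hsub'
      have heS : e ∈ Sc := hsub' (Finset.mem_insert_self _ _)
      have hD : D ⊆ Sc := fun x hx => hsub' (Finset.mem_insert_of_mem hx)
      have h1 : E \ D ∈ 𝓕 := ihD hD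
      have h2 : E \ insert e D = (E \ D).erase e := by
        ext x
        simp only [Finset.mem_sdiff, Finset.mem_insert, Finset.mem_erase]
        tauto
      rw [h2]
      exact hdown (E \ D) h1 e heS (Finset.mem_sdiff.mpr ⟨hScE heS, he⟩)
  have hmem : ∀ A ∈ Sc.powerset, C ∪ A ∈ 𝓕 := by
    intro A hA
    rw [Finset.mem_powerset] at hA
    have hCA : C ∪ A = E \ (Sc \ A) := by
      ext x
      simp only [hCdef, Finset.mem_union, Finset.mem_sdiff]
      constructor
      · rintro (⟨hxE, hxS⟩ | hxA)
        · exact ⟨hxE, fun h => hxS h.1⟩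
        · exact ⟨hScE (hA hxA), fun h => h.2 hxA⟩
      · rintro ⟨hxE, hx⟩
        by_cases hxS : x ∈ Sc
        · by_cases hxA : x ∈ A
          · exact Or.inr hxA
          · exact absurd ⟨hxS, hxA⟩ hx
        · exact Or.inl ⟨hxE, hxS⟩
    rw [hCA]
    exact hmemD (Sc \ A) (Finset.sdiff_subset)
  have hdecomp : ∀ F ∈ 𝓕, C ∪ (F ∩ Sc) = F := by
    intro F hF
    ext x
    simp only [Finset.mem_union, Finset.mem_inter]
    constructor
    · rintro (hx | ⟨hx, -⟩)
      · exact hCsub F hF hx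
      · exact hx
    · intro hx
      by_cases hxS : x ∈ Sc
      · exact Or.inr ⟨hx, hxS⟩
      · exact Or.inl (Finset.mem_sdiff.mpr ⟨hsub F hF hx, hxS⟩)
  -- cardinalities
  have hV : Nonempty V := hT.isConnected.nonempty
  have hVE : Fintype.card V = E.card + 1 := by
    have h1 := hT.card_edgeFinset
    rw [← hEdef] at h1
    omega
  have hCS : C.card + Sc.card = E.card := Finset.card_sdiff_add_card_eq_card hScE
  refine ⟨Sc.card, fun F hF => by rw [hSconst F hF], fun u => ?_⟩
  have hcomp : ∀ A ∈ Sc.powerset, compCount (↑(C ∪ A) : Set (Sym2 V)) =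
      Sc.card + 1 - A.card := by
    intro A hA
    rw [Finset.mem_powerset] at hA
    have hsubE : C ∪ A ⊆ E := Finset.union_subset Finset.sdiff_subset (hA.trans hScE)
    have hsubE' : ↑(C ∪ A) ⊆ T.edgeSet := by
      rw [← T.coe_edgeFinset]
      exact Finset.coe_subset.mpr hsubE
    have h0 := forestCard T hT.IsAcyclic (C ∪ A) hsubE'
    have hdisj : Disjoint C A := by
      rw [Finset.disjoint_left]
      intro x hxC hxA
      exact (Finset.mem_sdiff.mp hxC).2 (hA hxA)
    have hcard : (C ∪ A).card = C.card + A.card := Finset.card_union_of_disjoint hdisj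
    have hAle : A.card ≤ Sc.card := Finset.card_le_card hA
    have : compCount (↑(C ∪ A) : Set (Sym2 V)) =
        Nat.card (SimpleGraph.fromEdgeSet (↑(C ∪ A) : Set (Sym2 V))).ConnectedComponent := rfl
    omega
  calc (∑ F ∈ 𝓕, u ^ compCount (F : Set (Sym2 V)))
      = ∑ A ∈ Sc.powerset, u ^ compCount ((C ∪ A : Finset (Sym2 V)) : Set (Sym2 V)) := by
        refine Finset.sum_bij' (fun F _ => F ∩ Sc) (fun A _ => C ∪ A) ?_ ?_ ?_ ?_ ?_
        · exact fun F hF => Finset.mem_powerset.mpr Finset.inter_subset_right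
        · exact fun A hA => hmem A hA
        · exact fun F hF => hdecomp F hF
        · intro A hA
          rw [Finset.mem_powerset] at hA
          ext x
          simp only [Finset.mem_inter, Finset.mem_union]
          constructor
          · rintro ⟨hx | hx, hxS⟩
            · exact absurd hxS (Finset.mem_sdiff.mp hx).2
            · exact hx
          · intro hx
            exact ⟨Or.inr hx, hA hx⟩
        · intro F hF
          rw [hdecomp F hF]
    _ = ∑ A ∈ Sc.powerset, u ^ (Sc.card + 1 - A.card) := by
        exact Finset.sum_congr rfl fun A hA => by rw [hcomp A hA]
    _ = ∑ A ∈ Sc.powerset, u * u ^ (Sc.card - A.card) := by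
        refine Finset.sum_congr rfl fun A hA => ?_
        have hAle : A.card ≤ Sc.card := Finset.card_le_card (Finset.mem_powerset.mp hA)
        rw [← pow_succ']
        congr 1
        omega
    _ = u * ∑ A ∈ Sc.powerset, u ^ (Sc.card - A.card) := by rw [Finset.mul_sum]
    _ = u * (1 + u) ^ Sc.card := by
        congr 1
        have hpa := Finset.prod_add (fun _ : Sym2 V => (1 : ℝ)) (fun _ => u) Sc
        simp only [Finset.prod_const, one_pow, one_mul] at hpa
        rw [hpa]
        exact Finset.sum_congr rfl fun A hA => by
          rw [Finset.card_sdiff_of_subset (Finset.mem_powerset.mp hA)]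
end

section
/- The power series Φ(x) = Σ_{i≥2} (3i−3)!/((i−1)!² · i!) x^i satisfies the differential equation x(27x−1)Φ''(x) + 6Φ(x) + 6x = 0. -/
open PowerSeries

noncomputable def PhiPS : PowerSeries ℚ :=
  PowerSeries.mk fun i =>
    if 2 ≤ i then ((3 * i - 3).factorial : ℚ) / (((i - 1).factorial) ^ 2 * i.factorial)
    else 0

lemma phi_coeff (i : ℕ) : (coeff i) PhiPS =
    if 2 ≤ i then ((3 * i - 3).factorial : ℚ) / (((i - 1).factorial) ^ 2 * i.factorial)
    else 0 := by
  simp [PhiPS, coeff_mk]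

lemma phi_coeff2 (m : ℕ) : (coeff (m + 2)) PhiPS =
    ((3 * m + 3).factorial : ℚ) / (((m + 1).factorial) ^ 2 * (m + 2).factorial) := by
  rw [phi_coeff, if_pos (by omega), show 3*(m+2)-3 = 3*m+3 from by omega,
    show m+2-1 = m+1 from by omega]

/-- `Φ` satisfies `x(27x-1)Φ''(x) + 6Φ(x) + 6x = 0`. -/
theorem stmt13 :
    X * (27 * X - 1) * (d⁄dX ℚ (d⁄dX ℚ PhiPS)) + 6 * PhiPS + 6 * X = 0 := by
  have h : X * (27 * X - 1) * (d⁄dX ℚ (d⁄dX ℚ PhiPS)) + 6 * PhiPS + 6 * X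
      = (C 27) * (X^2 * (d⁄dX ℚ (d⁄dX ℚ PhiPS))) - X * (d⁄dX ℚ (d⁄dX ℚ PhiPS))
        + (C 6) * PhiPS + (C 6) * X := by
    rw [show (C 27 : ℚ⟦X⟧) = 27 from map_ofNat _ 27, show (C 6 : ℚ⟦X⟧) = 6 from map_ofNat _ 6]
    ring
  rw [h]
  ext n
  simp only [map_add, map_sub, coeff_C_mul, map_zero]
  match n with
  | 0 => simp [phi_coeff]
  | 1 =>
    rw [coeff_succ_X_mul, coeff_derivative, coeff_derivative, phi_coeff2 0,
      coeff_X_pow_mul' _ 2 1, if_neg (by omega)]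
    simp [phi_coeff, coeff_X, Nat.factorial]
    norm_num
  | (m + 2) =>
    rw [coeff_X_pow_mul, coeff_succ_X_mul, coeff_derivative, coeff_derivative,
      coeff_derivative, coeff_derivative, phi_coeff2, phi_coeff2 (m+1),
      coeff_X, if_neg (by omega)]
    have e1 : (m + 1 + 2) = m + 3 := by omega
    rw [e1]
    have f1 : ((3 * (m+1) + 3).factorial : ℚ) =
        (3*m+6) * ((3*m+5) * ((3*m+4) * (3*m+3).factorial)) := by
      have : 3 * (m+1) + 3 = (3*m+5) + 1 := by omega
      rw [this, Nat.factorial_succ, show (3*m+5) = (3*m+4)+1 from by omega,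
        Nat.factorial_succ, show (3*m+4) = (3*m+3)+1 from by omega, Nat.factorial_succ]
      push_cast; ring
    have f2 : ((m + 1 + 1).factorial : ℚ) = (m+2) * (m+1).factorial := by
      rw [show m+1+1 = (m+1)+1 from rfl, Nat.factorial_succ]; push_cast; ring
    have f3 : ((m + 3).factorial : ℚ) = (m+3) * (m+2).factorial := by
      rw [show m+3 = (m+2)+1 from rfl, Nat.factorial_succ]; push_cast; ring
    have f4 : ((m + 2).factorial : ℚ) = (m+2) * (m+1).factorial := by
      rw [show m+2 = (m+1)+1 from rfl, Nat.factorial_succ]; push_cast; ring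
    rw [f1, f2, f3, f4]
    have h1 : ((m+1).factorial : ℚ) ≠ 0 := Nat.cast_ne_zero.mpr (Nat.factorial_ne_zero _)
    have h2 : ((m+2).factorial : ℚ) ≠ 0 := Nat.cast_ne_zero.mpr (Nat.factorial_ne_zero _)
    have h3 : ((m:ℚ)+2) ≠ 0 := by positivity
    have h4 : ((m:ℚ)+3) ≠ 0 := by positivity
    have h5 : ((3*m+3).factorial : ℚ) ≠ 0 := Nat.cast_ne_zero.mpr (Nat.factorial_ne_zero _)
    field_simp
    push_cast
    ring
end

section
/- The power series θ(x) = 4 Σ_{i≥2} (3i−3)!/((i−2)! · i!²) x^i and Φ(x) = Σ_{i≥2} (3i−3)!/((i−1)!² · i!) x^i satisfy the identity 3θ(x) = 2(27x−1)Φ'(x) − 42Φ(x) + 12x. -/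
open PowerSeries

/-- The formal power series `θ(x) = 4 Σ_{i≥2} (3i-3)!/((i-2)! i!²) x^i`. -/
noncomputable def thetaPS : PowerSeries ℚ :=
  PowerSeries.mk fun i =>
    if 2 ≤ i then 4 * ((3 * i - 3).factorial : ℚ) / ((i - 2).factorial * (i.factorial) ^ 2)
    else 0

/-- `3θ(x) = 2(27x-1)Φ'(x) - 42Φ(x) + 12x`. -/
theorem stmt14 :
    3 * thetaPS = 2 * (27 * X - 1) * (d⁄dX ℚ PhiPS) - 42 * PhiPS + 12 * X := by
  have key : 2 * (27 * X - 1) * (d⁄dX ℚ PhiPS) =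
      C (R := ℚ) 54 * (X * d⁄dX ℚ PhiPS) - C (R := ℚ) 2 * d⁄dX ℚ PhiPS := by
    rw [show ((C (R := ℚ)) 54 : ℚ⟦X⟧) = 54 from map_ofNat (C (R := ℚ)) 54, show ((C (R := ℚ)) 2 : ℚ⟦X⟧) = 2 by exact (map_ofNat (C (R := ℚ)) _).symm]
    ring
  rw [key, show (3:ℚ⟦X⟧) = C (R := ℚ) 3 from (map_ofNat (C (R := ℚ)) 3).symm, show (42:ℚ⟦X⟧) = C (R := ℚ) 42 from (map_ofNat (C (R := ℚ)) 42).symm,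
    show (12:ℚ⟦X⟧) = C (R := ℚ) 12 by exact (map_ofNat (C (R := ℚ)) _).symm]
  ext n
  match n with
  | 0 =>
    simp [thetaPS, PhiPS, coeff_derivative, coeff_C_mul, coeff_zero_X_mul, -coeff_zero_eq_constantCoeff]
  | 1 =>
    simp [thetaPS, PhiPS, coeff_derivative, coeff_C_mul, coeff_succ_X_mul]
    norm_num [Nat.factorial]
  | (k+2) =>
    simp only [thetaPS, PhiPS, map_sub, map_add, coeff_C_mul, coeff_succ_X_mul,
      coeff_derivative, coeff_mk, coeff_X, if_neg (by omega : ¬ (k+2 = 1)),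
      if_pos (by omega : 2 ≤ k+2), if_pos (by omega : 2 ≤ k+1+1+1)]
    have h1 : 3 * (k + 2) - 3 = 3*k+3 := by omega
    have h2 : k + 2 - 2 = k := by omega
    have h3 : 3 * (k + 1 + 1) - 3 = 3*k+3 := by omega
    have h4 : k + 1 + 1 - 1 = k+1 := by omega
    have h5 : 3 * (k + 2 + 1) - 3 = 3*k+6 := by omega
    have h6 : k + 2 + 1 - 1 = k+2 := by omega
    have h7 : k + 2 - 1 = k+1 := by omega
    simp only [h1, h2, h3, h4, h5, h6, h7]
    have e6 : ((3*k+6).factorial : ℚ) = ((3*(k:ℚ)+6)*(3*k+5)*(3*k+4)) * (3*k+3).factorial := by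
      rw [show 3*k+6 = (3*k+5)+1 by ring, Nat.factorial_succ,
        show 3*k+5 = (3*k+4)+1 by ring, Nat.factorial_succ,
        show 3*k+4 = (3*k+3)+1 by ring, Nat.factorial_succ]
      push_cast; ring
    have e1 : ((k+1).factorial : ℚ) = ((k:ℚ)+1) * k.factorial := by
      rw [Nat.factorial_succ]; push_cast; ring
    have e2 : ((k+2).factorial : ℚ) = ((k:ℚ)+2)*((k:ℚ)+1) * k.factorial := by
      rw [show k+2 = (k+1)+1 from rfl, Nat.factorial_succ, Nat.factorial_succ]; push_cast; ring
    have e3 : ((k+2+1).factorial : ℚ) = ((k:ℚ)+3)*((k:ℚ)+2)*((k:ℚ)+1) * k.factorial := by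
      rw [show k+2+1 = (k+2)+1 from rfl, Nat.factorial_succ]; push_cast; rw [e2]; ring
    rw [e6, e1, e2, e3]
    have hk : (k.factorial : ℚ) ≠ 0 := Nat.cast_ne_zero.mpr k.factorial_ne_zero
    have hk1 : ((k:ℚ)+1) ≠ 0 := by positivity
    have hk2 : ((k:ℚ)+2) ≠ 0 := by positivity
    have hk3 : ((k:ℚ)+3) ≠ 0 := by positivity
    push_cast
    field_simp
    ring
end

section
/- The power series Ψ₁(z) = Σ_{i≥1} (4i−4)!/((2i−2)! · i! · (i−1)!) z^i and Ψ₂(z) = Σ_{i≥1} (4i−2)!/((2i−1)! · (i!)²) z^i satisfy the two identities (1−64z)Ψ₁'(z) + 48Ψ₁(z) + 2Ψ₂(z) = 1 and z(1−64z)Ψ₂'(z) + 6Ψ₁(z) + 16zΨ₂(z) = 8z. -/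
open PowerSeries

/-- `Ψ₁(z) = Σ_{i≥1} (4i-4)!/((2i-2)! i! (i-1)!) z^i`. -/
noncomputable def Psi1PS : PowerSeries ℚ :=
  PowerSeries.mk fun i =>
    if 1 ≤ i then
      ((4 * i - 4).factorial : ℚ) / ((2 * i - 2).factorial * i.factorial * (i - 1).factorial)
    else 0

/-- `Ψ₂(z) = Σ_{i≥1} (4i-2)!/((2i-1)! (i!)²) z^i`. -/
noncomputable def Psi2PS : PowerSeries ℚ :=
  PowerSeries.mk fun i =>
    if 1 ≤ i then ((4 * i - 2).factorial : ℚ) / ((2 * i - 1).factorial * (i.factorial) ^ 2)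
    else 0

noncomputable def A (j : ℕ) : ℚ :=
  ((4*j).factorial : ℚ) / ((2*j).factorial * (j+1).factorial * j.factorial)

noncomputable def B (j : ℕ) : ℚ :=
  ((4*j+2).factorial : ℚ) / ((2*j+1).factorial * ((j+1).factorial)^2)

lemma fact_ne (n : ℕ) : (n.factorial : ℚ) ≠ 0 := by
  exact_mod_cast n.factorial_ne_zero

lemma hB (j : ℕ) : ((j:ℚ)+1) * B j = 2*(4*(j:ℚ)+1) * A j := by
  have h2 : (4*j+2).factorial = (4*j+2) * ((4*j+1) * (4*j).factorial) := by
    rw [show 4*j+2 = (4*j+1)+1 from rfl, Nat.factorial_succ, Nat.factorial_succ]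
  have h3 : (2*j+1).factorial = (2*j+1) * (2*j).factorial := Nat.factorial_succ _
  have h4 : (j+1).factorial = (j+1) * j.factorial := Nat.factorial_succ _
  rw [A, B, h2, h3, h4]
  have := fact_ne (4*j); have := fact_ne (2*j); have := fact_ne j
  push_cast
  field_simp
  ring

lemma hA (j : ℕ) : ((j:ℚ)+2)*((j:ℚ)+1) * A (j+1) = 4*(4*(j:ℚ)+1)*(4*(j:ℚ)+3) * A j := by
  have h1 : (4*(j+1)).factorial
      = (4*j+4) * ((4*j+3) * ((4*j+2) * ((4*j+1) * (4*j).factorial))) := by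
    rw [show 4*(j+1) = (4*j+3)+1 by ring, Nat.factorial_succ,
      show 4*j+3 = (4*j+2)+1 from rfl, Nat.factorial_succ,
      show 4*j+2 = (4*j+1)+1 from rfl, Nat.factorial_succ, Nat.factorial_succ]
  have h2 : (2*(j+1)).factorial = (2*j+2) * ((2*j+1) * (2*j).factorial) := by
    rw [show 2*(j+1) = (2*j+1)+1 by ring, Nat.factorial_succ, Nat.factorial_succ]
  have h3 : (j+1+1).factorial = (j+2) * ((j+1) * j.factorial) := by
    rw [Nat.factorial_succ, Nat.factorial_succ]
  have h4 : (j+1).factorial = (j+1) * j.factorial := Nat.factorial_succ _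
  rw [A, A, h1, h2, h3, h4]
  have := fact_ne (4*j); have := fact_ne (2*j); have := fact_ne j
  push_cast
  field_simp
  ring

lemma key1 (j : ℕ) :
    A (j+1) * ((j:ℚ)+2) - 64 * (A j * ((j:ℚ)+1)) + 48 * A j + 2 * B j = 0 := by
  have hj : ((j:ℚ)+1) ≠ 0 := by positivity
  apply mul_left_cancel₀ hj
  linear_combination hA j + 2 * hB j

lemma key2 (j : ℕ) :
    B (j+1) * ((j:ℚ)+2) - 64 * (B j * ((j:ℚ)+1)) + 6 * A (j+1) + 16 * B j = 0 := by
  have hj : ((j:ℚ)+1) ≠ 0 := by positivity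
  apply mul_left_cancel₀ hj
  linear_combination (norm := (push_cast; ring1))
    ((j:ℚ)+1) * hB (j+1) + 8 * hA j - (64*(j:ℚ)+48) * hB j

lemma c1 (j : ℕ) : coeff (R := ℚ) (j+1) Psi1PS = A j := by
  simp only [Psi1PS, coeff_mk, if_pos (Nat.le_add_left 1 j), A,
    show 4*(j+1)-4 = 4*j by omega, show 2*(j+1)-2 = 2*j by omega,
    Nat.add_sub_cancel]

lemma c2 (j : ℕ) : coeff (R := ℚ) (j+1) Psi2PS = B j := by
  simp only [Psi2PS, coeff_mk, if_pos (Nat.le_add_left 1 j), B,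
    show 4*(j+1)-2 = 4*j+2 by omega, show 2*(j+1)-1 = 2*j+1 by omega]

lemma c1zero : coeff (R := ℚ) 0 Psi1PS = 0 := by simp [Psi1PS]
lemma c2zero : coeff (R := ℚ) 0 Psi2PS = 0 := by simp [Psi2PS]

/-- `(1-64z)Ψ₁' + 48Ψ₁ + 2Ψ₂ = 1` and `z(1-64z)Ψ₂' + 6Ψ₁ + 16zΨ₂ = 8z`. -/
theorem stmt15 :
    (1 - 64 * X) * (d⁄dX ℚ Psi1PS) + 48 * Psi1PS + 2 * Psi2PS = 1 ∧
    X * (1 - 64 * X) * (d⁄dX ℚ Psi2PS) + 6 * Psi1PS + 16 * X * Psi2PS = 8 * X := by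
  have h64 : (64 : ℚ⟦X⟧) = C (R := ℚ) 64 := (map_ofNat (C (R := ℚ)) 64).symm
  constructor
  · have e : (1 - 64 * X) * (d⁄dX ℚ Psi1PS) + 48 * Psi1PS + 2 * Psi2PS
        = d⁄dX ℚ Psi1PS - C (R := ℚ) 64 * (X * d⁄dX ℚ Psi1PS) + C (R := ℚ) 48 * Psi1PS
          + C (R := ℚ) 2 * Psi2PS := by
      rw [← h64, ← (map_ofNat (C (R := ℚ)) 48 : C (R := ℚ) 48 = _), ← (map_ofNat (C (R := ℚ)) 2 : C (R := ℚ) 2 = _)]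
      ring
    rw [e]
    ext n
    rcases n with _ | j
    · simp only [map_add, map_sub, coeff_C_mul, coeff_zero_X_mul, coeff_derivative,
        coeff_one, c1zero, c2zero, c1]
      norm_num [A]
    · simp only [map_add, map_sub, coeff_C_mul, coeff_succ_X_mul, coeff_derivative,
        coeff_one, c1, c2]
      push_cast
      linear_combination key1 j
  · have e : X * (1 - 64 * X) * (d⁄dX ℚ Psi2PS) + 6 * Psi1PS + 16 * X * Psi2PS
        = X * d⁄dX ℚ Psi2PS - C (R := ℚ) 64 * (X * (X * d⁄dX ℚ Psi2PS)) + C (R := ℚ) 6 * Psi1PS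
          + C (R := ℚ) 16 * (X * Psi2PS) := by
      rw [← h64, ← (map_ofNat (C (R := ℚ)) 6 : C (R := ℚ) 6 = _), ← (map_ofNat (C (R := ℚ)) 16 : C (R := ℚ) 16 = _)]
      ring
    have e8 : (8 : ℚ⟦X⟧) * X = C (R := ℚ) 8 * X := by
      rw [← (map_ofNat (C (R := ℚ)) 8 : C (R := ℚ) 8 = _)]
    rw [e, e8]
    ext n
    rcases n with _ | _ | j
    · simp [Psi1PS]
    · simp only [map_add, map_sub, coeff_C_mul, coeff_succ_X_mul, coeff_zero_X_mul,
        coeff_derivative, coeff_X, c1, c2, c2zero]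
      norm_num [A, B, Nat.factorial]
    · simp only [map_add, map_sub, coeff_C_mul, coeff_succ_X_mul, coeff_derivative,
        coeff_X, c1, c2]
      push_cast
      norm_num
      linear_combination key2 j
end
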